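/- arXiv:1503.06208 — 3 statements merged into one kernel-verified Lean document; each statement's English description precedes it below -/
import Mathlib

section
/- Suppose {u_k} is a sequence in BV(Ω) with u_k → u in L¹_loc(Ω) and ∫_Ω |Du_k| → ∫_Ω |Du|. Then for every open set A ⊆ Ω, ∫_{closure(A) ∩ Ω} |Du| ≥ limsup_{k→∞} ∫_{closure(A) ∩ Ω} |Du_k|. In particular, if ∫_{∂A ∩ Ω} |Du| = 0, then ∫_A |Du| = lim_{k→∞} ∫_A |Du_k|. -/
open MeasureTheory Topology Filter Set Metric
open scoped ENNReal NNReal RealInnerProductSpace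

noncomputable section

abbrev Eucl (n : ℕ) := EuclideanSpace ℝ (Fin n)

namespace BVPaper

variable {n : ℕ}

/-- Integral of a function against a signed measure. -/
def sInt (φ : Eucl n → ℝ) (μ : SignedMeasure (Eucl n)) : ℝ :=
  (∫ x, φ x ∂μ.toJordanDecomposition.posPart) - ∫ x, φ x ∂μ.toJordanDecomposition.negPart

/-- `φ` is a smooth test function compactly supported in `Ω`. -/
def IsTest (Ω : Set (Eucl n)) (φ : Eucl n → ℝ) : Prop :=
  ContDiff ℝ (⊤ : ℕ∞) φ ∧ HasCompactSupport φ ∧ tsupport φ ⊆ Ω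

/-- `Du` is the distributional gradient of `u` on the open set `Ω`. -/
def IsDistGrad (Ω : Set (Eucl n)) (u : Eucl n → ℝ) (Du : Fin n → SignedMeasure (Eucl n)) : Prop :=
  ∀ (i : Fin n) (φ : Eucl n → ℝ), IsTest Ω φ →
    (∫ x in Ω, u x * fderiv ℝ φ x (EuclideanSpace.single i 1)) = - sInt φ (Du i)

/-- `ν` is the (Euclidean) total variation measure of the vector measure `Du`. -/
def IsVarMeasure (Du : Fin n → SignedMeasure (Eucl n)) (ν : Measure (Eucl n)) : Prop :=
  ∀ A : Set (Eucl n), MeasurableSet A →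
    ν A = ⨆ (P : ℕ → Set (Eucl n)) (_ : ∀ j, MeasurableSet (P j))
      (_ : Pairwise (Function.onFun Disjoint P)) (_ : (⋃ j, P j) = A),
      ∑' j, ENNReal.ofReal (Real.sqrt (∑ i : Fin n, ((Du i) (P j))^2))

/-- The total-variation norm `‖Du‖(Ω)`, as an infimum over representations. -/
def varNorm (Ω : Set (Eucl n)) (u : Eucl n → ℝ) : ℝ≥0∞ :=
  ⨅ (Du : Fin n → SignedMeasure (Eucl n)) (ν : Measure (Eucl n))
    (_ : IsDistGrad Ω u Du) (_ : IsVarMeasure Du ν), ν Ω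

/-- `U` is a bounded open set with smooth boundary. -/
def SmoothBoundedOpen (U : Set (Eucl n)) : Prop :=
  IsOpen U ∧ Bornology.IsBounded U ∧
    ∀ x ∈ frontier U, ∃ f : Eucl n → ℝ, ContDiff ℝ (⊤ : ℕ∞) f ∧ f x = 0 ∧
      fderiv ℝ f x ≠ 0 ∧ ∃ ε > 0, ∀ y ∈ Metric.ball x ε, (y ∈ U ↔ f y < 0)

/-- The value `μ(A)` of the signed measure `μ = μp - μn`. -/
def measVal (μp μn : Measure (Eucl n)) (A : Set (Eucl n)) : ℝ :=
  (μp A).toReal - (μn A).toReal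

/-- The integral `∫ g dμ` against the signed measure `μ = μp - μn`. -/
def muInt (μp μn : Measure (Eucl n)) (g : Eucl n → ℝ) : ℝ :=
  (∫ x, g x ∂μp) - ∫ x, g x ∂μn

/-- `ρ` is a measure on `Ω` which is locally finite in `Ω`. -/
def LocFinOn (Ω : Set (Eucl n)) (ρ : Measure (Eucl n)) : Prop :=
  ρ Ωᶜ = 0 ∧ ∀ x ∈ Ω, ∃ s ∈ 𝓝 x, ρ s ≠ ⊤

/-- `ustar` is the precise representative of `u` on `Ω` (defined `H^{n-1}`-a.e.). -/
def IsPreciseRepOn (Ω : Set (Eucl n)) (u ustar : Eucl n → ℝ) : Prop :=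
  ∀ᵐ x ∂((μH[((n : ℝ) - 1)] : Measure (Eucl n)).restrict Ω),
    Tendsto (fun r : ℝ =>
        (∫ y in Metric.ball x r ∩ Ω, u y) / (volume (Metric.ball x r ∩ Ω)).toReal)
      (𝓝[>] 0) (𝓝 (ustar x))

/-- `u ∈ BV_c^∞(Ω)` with gradient data `Du`, `ν`. -/
def IsBVcInf (Ω : Set (Eucl n)) (u : Eucl n → ℝ)
    (Du : Fin n → SignedMeasure (Eucl n)) (ν : Measure (Eucl n)) : Prop :=
  (∃ M, ∀ x, |u x| ≤ M) ∧ HasCompactSupport u ∧ tsupport u ⊆ Ω ∧ IntegrableOn u Ω ∧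
    IsDistGrad Ω u Du ∧ IsVarMeasure Du ν ∧ ν Ω ≠ ⊤

/-- The space `BV_{n/(n-1)}(ℝⁿ)`. -/
def BVnn1 (n : ℕ) : Set (Eucl n → ℝ) :=
  {u | AEStronglyMeasurable u volume ∧
    eLpNorm u ((n : ℝ≥0∞) / ((n : ℝ≥0∞) - 1)) volume ≠ ⊤ ∧
    ∃ Du ν, IsDistGrad Set.univ u Du ∧ IsVarMeasure Du ν ∧ ν Set.univ ≠ ⊤}

/-- The space `BV(ℝⁿ)`. -/
def BVfull (n : ℕ) : Set (Eucl n → ℝ) :=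
  {u | Integrable u volume ∧
    ∃ Du ν, IsDistGrad Set.univ u Du ∧ IsVarMeasure Du ν ∧ ν Set.univ ≠ ⊤}

/-- A functional on the function class `X` is linear. -/
def SubLinear (X : Set (Eucl n → ℝ)) (T : {u // u ∈ X} → ℝ) : Prop :=
  ∀ (u v w : {u // u ∈ X}) (a b : ℝ),
    (w : Eucl n → ℝ) = a • (u : Eucl n → ℝ) + b • (v : Eucl n → ℝ) →
      T w = a * T u + b * T v

/-- The operator norm of a functional on `X` w.r.t. the seminorm `p`. -/
def subDualNorm (X : Set (Eucl n → ℝ)) (p : (Eucl n → ℝ) → ℝ≥0∞)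
    (T : {u // u ∈ X} → ℝ) : ℝ≥0∞ :=
  ⨆ u : {u // u ∈ X}, ENNReal.ofReal |T u| / p (u : Eucl n → ℝ)


/-- A functional on distributions that is linear on test functions. -/
def TestLinear (T : (Eucl n → ℝ) → ℝ) : Prop :=
  ∀ (φ ψ : Eucl n → ℝ), IsTest Set.univ φ → IsTest Set.univ ψ → ∀ a b : ℝ,
    T (a • φ + b • ψ) = a * T φ + b * T ψ

/-- The dual norm of a distribution as a functional on `Ẇ^{1,1}(ℝⁿ)`,
computed on the dense class of test functions. -/
def distNormW11 (T : (Eucl n → ℝ) → ℝ) : ℝ≥0∞ :=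
  ⨆ (φ : Eucl n → ℝ) (_ : IsTest Set.univ φ),
    ENNReal.ofReal |T φ| / ∫⁻ x, (‖gradient φ x‖₊ : ℝ≥0∞)

/-- `T = div F` in the sense of distributions. -/
def IsDivOf (F : Eucl n → Eucl n) (T : (Eucl n → ℝ) → ℝ) : Prop :=
  ∀ φ : Eucl n → ℝ, IsTest Set.univ φ →
    T φ = - ∫ x, (inner ℝ (F x) (gradient φ x) : ℝ)

/-- `u` has zero trace on `∂Ω`. -/
def ZeroTrace (Ω : Set (Eucl n)) (u : Eucl n → ℝ) : Prop :=
  ∀ᵐ x ∂((μH[((n : ℝ) - 1)] : Measure (Eucl n)).restrict (frontier Ω)),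
    Tendsto (fun r : ℝ => (∫ y in Metric.ball x r ∩ Ω, |u y|) / r ^ n)
      (𝓝[>] 0) (𝓝 0)

/-- `Ω` has Lipschitz boundary: near each boundary point, after a rotation,
`Ω` is the open region above the graph of a Lipschitz function. -/
def LipschitzBoundary (Ω : Set (Eucl n)) : Prop :=
  ∀ x ∈ frontier Ω, ∃ r > (0 : ℝ), ∃ v : Eucl n, ‖v‖ = 1 ∧
    ∃ (g : Eucl n → ℝ) (L : ℝ≥0), LipschitzWith L g ∧
      Ω ∩ Metric.ball x r =
        {y ∈ Metric.ball x r | g (y - (inner ℝ y v : ℝ) • v) < (inner ℝ y v : ℝ)}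

/-- The space `BV_0(Ω)` of `BV(Ω)` functions with zero trace. -/
def BV0set (Ω : Set (Eucl n)) : Set (Eucl n → ℝ) :=
  {u | IntegrableOn u Ω ∧ ZeroTrace Ω u ∧
    ∃ Du ν, IsDistGrad Ω u Du ∧ IsVarMeasure Du ν ∧ ν Ω ≠ ⊤}

end BVPaper

open BVPaper

namespace StrictConvAux
open scoped Manifold
variable {n : ℕ}


lemma cs_le_sqrt (e v : Fin n → ℝ) (he : ∑ i, e i ^ 2 ≤ 1) :
    ∑ i, e i * v i ≤ Real.sqrt (∑ i, v i ^ 2) := by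
  have h := Finset.sum_mul_sq_le_sq_mul_sq Finset.univ e v
  have hv : (0:ℝ) ≤ ∑ i, v i ^ 2 := Finset.sum_nonneg fun i _ => sq_nonneg _
  have he0 : (0:ℝ) ≤ ∑ i, e i ^ 2 := Finset.sum_nonneg fun i _ => sq_nonneg _
  have h2 : (∑ i, e i * v i)^2 ≤ ∑ i, v i ^ 2 := by nlinarith
  calc ∑ i, e i * v i ≤ |∑ i, e i * v i| := le_abs_self _
  _ = Real.sqrt ((∑ i, e i * v i)^2) := (Real.sqrt_sq_eq_abs _).symm
  _ ≤ _ := Real.sqrt_le_sqrt h2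

lemma var_ge_sqrt {Du : Fin n → SignedMeasure (Eucl n)} {ν : Measure (Eucl n)}
    (hν : IsVarMeasure Du ν) {E : Set (Eucl n)} (hE : MeasurableSet E) :
    ENNReal.ofReal (Real.sqrt (∑ i, ((Du i) E)^2)) ≤ ν E := by
  rw [hν E hE]
  set P : ℕ → Set (Eucl n) := fun j => if j = 0 then E else ∅ with hP
  have hmeas : ∀ j, MeasurableSet (P j) := fun j => by
    by_cases h : j = 0 <;> simp [hP, h, hE]
  have hdisj : Pairwise (Function.onFun Disjoint P) := by
    intro a b hab
    rcases eq_or_ne a 0 with ha | ha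
    · have hb : b ≠ 0 := by rintro rfl; exact hab ha
      simp [Function.onFun, hP, ha, hb]
    · simp [Function.onFun, hP, ha]
  have hun : (⋃ j, P j) = E := by
    apply Subset.antisymm
    · exact iUnion_subset fun j => by by_cases h : j = 0 <;> simp [hP, h]
    · exact subset_iUnion_of_subset 0 (by simp [hP])
  refine le_trans ?_ (le_iSup_of_le P <| le_iSup_of_le hmeas <| le_iSup_of_le hdisj <|
    le_iSup_of_le hun le_rfl)
  rw [tsum_eq_single 0 ?_]
  · simp [hP]
  · intro j hj
    simp [hP, hj, (Du _).empty]

lemma dot_le_var {Du : Fin n → SignedMeasure (Eucl n)} {ν : Measure (Eucl n)}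
    (hν : IsVarMeasure Du ν) {E : Set (Eucl n)} (hE : MeasurableSet E) (hfin : ν E ≠ ⊤)
    {e : Fin n → ℝ} (he : ∑ i, e i ^ 2 ≤ 1) :
    ∑ i, e i * (Du i) E ≤ (ν E).toReal := by
  have h1 := cs_le_sqrt e (fun i => (Du i) E) he
  have h2 := ENNReal.toReal_mono hfin (var_ge_sqrt hν hE)
  rw [ENNReal.toReal_ofReal (Real.sqrt_nonneg _)] at h2
  exact h1.trans h2


lemma integrable_of_bdd01 (μ : Measure (Eucl n)) [IsFiniteMeasure μ] {ψ : Eucl n → ℝ}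
    (hψc : Continuous ψ) (h01 : ∀ x, ψ x ∈ Icc (0:ℝ) 1) : Integrable ψ μ := by
  refine (integrable_const (1:ℝ)).mono' hψc.aestronglyMeasurable ?_
  exact Eventually.of_forall fun x => by
    rw [Real.norm_eq_abs, abs_of_nonneg (h01 x).1]; exact (h01 x).2

lemma antitone_meas (μ : Measure (Eucl n)) [IsFiniteMeasure μ] (ψ : Eucl n → ℝ) :
    Antitone (fun t => (μ {x | t < ψ x}).toReal) := by
  intro t t' h
  exact ENNReal.toReal_mono (measure_ne_top _ _)
    (measure_mono fun x hx => lt_of_le_of_lt h hx)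

lemma integrable_meas_lt (μ : Measure (Eucl n)) [IsFiniteMeasure μ] {ψ : Eucl n → ℝ}
    (h1 : ∀ x, ψ x ≤ 1) :
    IntegrableOn (fun t => (μ {x | t < ψ x}).toReal) (Ioi (0:ℝ)) := by
  have hmeas : Measurable fun t => (μ {x | t < ψ x}).toReal :=
    (antitone_meas μ ψ).measurable
  have h0 : ∀ t ∈ Ioi (1:ℝ), (μ {x | t < ψ x}).toReal = 0 := by
    intro t ht
    have : {x | t < ψ x} = ∅ := eq_empty_of_forall_notMem fun x hx =>
      absurd hx (not_lt.mpr ((h1 x).trans (le_of_lt ht)))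
    simp [this]
  rw [← Ioc_union_Ioi_eq_Ioi (zero_le_one (α := ℝ))]
  refine IntegrableOn.union ?_ ?_
  · refine Measure.integrableOn_of_bounded (measure_Ioc_lt_top).ne
      hmeas.aestronglyMeasurable (M := (μ univ).toReal) ?_
    exact Eventually.of_forall fun t => by
      rw [Real.norm_eq_abs, abs_of_nonneg ENNReal.toReal_nonneg]
      exact ENNReal.toReal_mono (measure_ne_top _ _) (measure_mono (subset_univ _))
  · exact (integrableOn_congr_fun h0 measurableSet_Ioi).mpr (integrableOn_zero)

lemma sInt_layer (s : SignedMeasure (Eucl n)) {ψ : Eucl n → ℝ} (hψc : Continuous ψ)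
    (h01 : ∀ x, ψ x ∈ Icc (0:ℝ) 1) :
    sInt ψ s = ∫ t in Ioi (0:ℝ),
      ((s.toJordanDecomposition.posPart {x | t < ψ x}).toReal
        - (s.toJordanDecomposition.negPart {x | t < ψ x}).toReal) := by
  rw [sInt, (integrable_of_bdd01 _ hψc h01).integral_eq_integral_meas_lt
      (Eventually.of_forall fun x => (h01 x).1),
    (integrable_of_bdd01 _ hψc h01).integral_eq_integral_meas_lt
      (Eventually.of_forall fun x => (h01 x).1)]
  exact (integral_sub (integrable_meas_lt _ fun x => (h01 x).2)
      (integrable_meas_lt _ fun x => (h01 x).2)).symm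

lemma sm_apply (s : SignedMeasure (Eucl n)) {E : Set (Eucl n)} (hE : MeasurableSet E) :
    s E = (s.toJordanDecomposition.posPart E).toReal
      - (s.toJordanDecomposition.negPart E).toReal := by
  conv_lhs => rw [← s.toSignedMeasure_toJordanDecomposition]
  rw [MeasureTheory.JordanDecomposition.toSignedMeasure, MeasureTheory.VectorMeasure.sub_apply,
    Measure.toSignedMeasure_apply_measurable hE, Measure.toSignedMeasure_apply_measurable hE]
  rfl

lemma dot_sInt_le {Du : Fin n → SignedMeasure (Eucl n)} {ν : Measure (Eucl n)}
    (hν : IsVarMeasure Du ν) {ψ : Eucl n → ℝ} {U : Set (Eucl n)} (hψc : Continuous ψ)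
    (h01 : ∀ x, ψ x ∈ Icc (0:ℝ) 1) (hsupp : Function.support ψ ⊆ U) (hU : MeasurableSet U)
    (hfin : ν U ≠ ⊤) {e : Fin n → ℝ} (he : ∑ i, e i ^ 2 ≤ 1) :
    ∑ i, e i * sInt ψ (Du i) ≤ (ν U).toReal := by
  have hint : ∀ s : SignedMeasure (Eucl n),
      IntegrableOn (fun t => ((s.toJordanDecomposition.posPart {x | t < ψ x}).toReal
        - (s.toJordanDecomposition.negPart {x | t < ψ x}).toReal)) (Ioi (0:ℝ)) :=
    fun s => (integrable_meas_lt _ fun x => (h01 x).2).sub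
      (integrable_meas_lt _ fun x => (h01 x).2)
  have hrw : ∀ i, e i * sInt ψ (Du i) = ∫ t in Ioi (0:ℝ),
      e i * (((Du i).toJordanDecomposition.posPart {x | t < ψ x}).toReal
        - ((Du i).toJordanDecomposition.negPart {x | t < ψ x}).toReal) := by
    intro i
    rw [sInt_layer (Du i) hψc h01, ← integral_const_mul]
  calc ∑ i, e i * sInt ψ (Du i)
      = ∫ t in Ioi (0:ℝ), ∑ i, e i *
        (((Du i).toJordanDecomposition.posPart {x | t < ψ x}).toReal
          - ((Du i).toJordanDecomposition.negPart {x | t < ψ x}).toReal) := by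
        rw [Finset.sum_congr rfl fun i _ => hrw i,
          ← integral_finset_sum _ fun i _ => (hint (Du i)).const_mul _]
    _ ≤ ∫ t in Ioi (0:ℝ), (Ioc (0:ℝ) 1).indicator (fun _ => (ν U).toReal) t := by
        refine setIntegral_mono_on
          (integrable_finset_sum _ fun i _ => (hint (Du i)).const_mul _)
          ((integrable_indicator_iff measurableSet_Ioc).mpr ((integrableOn_const_iff).mpr
            (Or.inr ((Measure.restrict_apply_le _ _).trans_lt measure_Ioc_lt_top))))
          measurableSet_Ioi ?_
        intro t ht
        have hEm : MeasurableSet {x | t < ψ x} :=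
          (isOpen_lt continuous_const hψc).measurableSet
        have hEU : {x | t < ψ x} ⊆ U := by
          intro x hx
          rw [Set.mem_setOf_eq] at hx
          refine hsupp ?_
          have : 0 < ψ x := lt_trans (mem_Ioi.mp ht) hx
          exact fun h0 => absurd h0 (by positivity)
        by_cases hle : t ≤ 1
        · have hmem : t ∈ Ioc (0:ℝ) 1 := ⟨mem_Ioi.mp ht, hle⟩
          rw [indicator_of_mem hmem]
          have := dot_le_var hν hEm (fun h => hfin (top_le_iff.mp (h ▸ measure_mono hEU))) he
          calc ∑ i, e i * (((Du i).toJordanDecomposition.posPart {x | t < ψ x}).toReal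
              - ((Du i).toJordanDecomposition.negPart {x | t < ψ x}).toReal)
              = ∑ i, e i * (Du i) {x | t < ψ x} := by
                refine Finset.sum_congr rfl fun i _ => ?_
                rw [sm_apply (Du i) hEm]
            _ ≤ (ν {x | t < ψ x}).toReal := this
            _ ≤ (ν U).toReal := ENNReal.toReal_mono hfin (measure_mono hEU)
        · have hempty : {x | t < ψ x} = ∅ := eq_empty_of_forall_notMem fun x hx =>
            absurd (lt_of_le_of_lt ((h01 x).2) (not_le.mp hle)) (not_lt.mpr (le_of_lt hx))
          rw [indicator_of_notMem (fun hmem => hle hmem.2), hempty]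
          simp
    _ = (ν U).toReal := by
        rw [setIntegral_indicator measurableSet_Ioc]
        have : Ioi (0:ℝ) ∩ Ioc (0:ℝ) 1 = Ioc 0 1 := by
          rw [inter_eq_self_of_subset_right Ioc_subset_Ioi_self]
        rw [this]
        simp [Real.volume_Ioc]

lemma int_bounds (μ : Measure (Eucl n)) [IsFiniteMeasure μ] {ψ : Eucl n → ℝ}
    (hψc : Continuous ψ) (h01 : ∀ x, ψ x ∈ Icc (0:ℝ) 1) {K U : Set (Eucl n)}
    (hK : EqOn ψ 1 K) (hKm : MeasurableSet K) (hUm : MeasurableSet U)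
    (hsupp : Function.support ψ ⊆ U) :
    (μ K).toReal ≤ ∫ x, ψ x ∂μ ∧
      ∫ x, ψ x ∂μ ≤ (μ K).toReal + (μ (U \ K)).toReal := by
  have hint := integrable_of_bdd01 μ hψc h01
  constructor
  · rw [← measureReal_def, ← integral_indicator_one hKm]
    refine integral_mono ((integrable_const (1:ℝ)).indicator hKm) hint ?_
    intro x
    by_cases hx : x ∈ K
    · rw [indicator_of_mem hx, hK hx]
    · rw [indicator_of_notMem hx]; exact (h01 x).1
  · have hm2 : MeasurableSet (K ∪ (U \ K)) := hKm.union (hUm.diff hKm)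
    have hle : ∀ x, ψ x ≤ (K ∪ (U \ K)).indicator (fun _ => (1:ℝ)) x := by
      intro x
      by_cases hx : x ∈ K ∪ (U \ K)
      · rw [indicator_of_mem hx]; exact (h01 x).2
      · rw [indicator_of_notMem hx]
        by_cases hs : x ∈ Function.support ψ
        · exact absurd (Or.elim (em (x ∈ K)) Or.inl fun hk => Or.inr ⟨hsupp hs, hk⟩) hx
        · rw [Function.notMem_support.mp hs]
    calc ∫ x, ψ x ∂μ ≤ ∫ x, (K ∪ (U \ K)).indicator (fun _ => (1:ℝ)) x ∂μ :=
          integral_mono hint ((integrable_const (1:ℝ)).indicator hm2) hle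
      _ = (μ (K ∪ (U \ K))).toReal := integral_indicator_one hm2
      _ ≤ (μ K).toReal + (μ (U \ K)).toReal := by
          rw [← ENNReal.toReal_add (measure_ne_top _ _) (measure_ne_top _ _)]
          exact ENNReal.toReal_mono (by finiteness) (measure_union_le _ _)

lemma int_close (μ : Measure (Eucl n)) [IsFiniteMeasure μ] {ψ : Eucl n → ℝ}
    (hψc : Continuous ψ) (h01 : ∀ x, ψ x ∈ Icc (0:ℝ) 1) {K E U : Set (Eucl n)}
    (hK : EqOn ψ 1 K) (hKm : MeasurableSet K) (hEm : MeasurableSet E) (hUm : MeasurableSet U)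
    (hKE : K ⊆ E) (hsupp : Function.support ψ ⊆ U) {δ : ℝ}
    (h1 : (μ (E \ K)).toReal ≤ δ) (h2 : (μ (U \ K)).toReal ≤ δ) :
    |∫ x, ψ x ∂μ - (μ E).toReal| ≤ δ := by
  obtain ⟨hlow, hhigh⟩ := int_bounds μ hψc h01 hK hKm hUm hsupp
  have hE : (μ E).toReal ≤ (μ K).toReal + (μ (E \ K)).toReal := by
    rw [← ENNReal.toReal_add (measure_ne_top _ _) (measure_ne_top _ _)]
    refine ENNReal.toReal_mono (by finiteness) ?_
    calc μ E ≤ μ (K ∪ (E \ K)) := measure_mono (fun x hx => by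
          by_cases h : x ∈ K
          · exact Or.inl h
          · exact Or.inr ⟨hx, h⟩)
      _ ≤ μ K + μ (E \ K) := measure_union_le _ _
  have hKle : (μ K).toReal ≤ (μ E).toReal := ENNReal.toReal_mono (measure_ne_top _ _)
    (measure_mono hKE)
  rw [abs_le]
  constructor <;> linarith

lemma sInt_close {s : SignedMeasure (Eucl n)} {ψ : Eucl n → ℝ} (hψc : Continuous ψ)
    (h01 : ∀ x, ψ x ∈ Icc (0:ℝ) 1) {K E U : Set (Eucl n)}
    (hK : EqOn ψ 1 K) (hKm : MeasurableSet K) (hEm : MeasurableSet E) (hUm : MeasurableSet U)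
    (hKE : K ⊆ E) (hsupp : Function.support ψ ⊆ U) {δ : ℝ}
    (hp1 : (s.toJordanDecomposition.posPart (E \ K)).toReal ≤ δ)
    (hp2 : (s.toJordanDecomposition.posPart (U \ K)).toReal ≤ δ)
    (hq1 : (s.toJordanDecomposition.negPart (E \ K)).toReal ≤ δ)
    (hq2 : (s.toJordanDecomposition.negPart (U \ K)).toReal ≤ δ) :
    |sInt ψ s - s E| ≤ 2 * δ := by
  have hp := int_close s.toJordanDecomposition.posPart hψc h01 hK hKm hEm hUm hKE hsupp hp1 hp2
  have hq := int_close s.toJordanDecomposition.negPart hψc h01 hK hKm hEm hUm hKE hsupp hq1 hq2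
  rw [sInt, sm_apply s hEm]
  rw [abs_le] at hp hq ⊢
  constructor <;> [skip; skip] <;> cases hp <;> cases hq <;> linarith



lemma sInt_tendsto {Ω : Set (Eucl n)} {u : Eucl n → ℝ} {uk : ℕ → Eucl n → ℝ}
    {Du : Fin n → SignedMeasure (Eucl n)} {Duk : ℕ → Fin n → SignedMeasure (Eucl n)}
    (hu : IntegrableOn u Ω) (huk : ∀ k, IntegrableOn (uk k) Ω)
    (hDu : IsDistGrad Ω u Du) (hDuk : ∀ k, IsDistGrad Ω (uk k) (Duk k))
    (hL1loc : ∀ K : Set (Eucl n), K ⊆ Ω → IsCompact K →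
      Tendsto (fun k => ∫ x in K, |uk k x - u x|) atTop (𝓝 0))
    {ψ : Eucl n → ℝ} (hT : IsTest Ω ψ) (i : Fin n) :
    Tendsto (fun k => sInt ψ (Duk k i)) atTop (𝓝 (sInt ψ (Du i))) := by
  obtain ⟨hsm, hcs, hsub⟩ := hT
  set g : Eucl n → ℝ := fun x => fderiv ℝ ψ x (EuclideanSpace.single i 1) with hg
  have hgc : Continuous g :=
    (hsm.continuous_fderiv (by simp)).clm_apply continuous_const
  have hgsupp : Function.support g ⊆ tsupport ψ := by
    intro x hx
    refine support_fderiv_subset (𝕜 := ℝ) ?_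
    intro h0
    exact hx (by rw [hg]; simp only [h0]; rfl)
  set K : Set (Eucl n) := tsupport ψ with hKdef
  have hKc : IsCompact K := hcs
  have hKm : MeasurableSet K := (isClosed_tsupport ψ).measurableSet
  obtain ⟨M, hM⟩ : ∃ M : ℝ, ∀ x, |g x| ≤ M := by
    obtain ⟨M, hM⟩ := hKc.exists_bound_of_continuousOn hgc.continuousOn
    refine ⟨max M 0, fun x => ?_⟩
    by_cases hx : x ∈ K
    · exact (hM x hx).trans (le_max_left _ _)
    · rw [Function.notMem_support.mp (fun h => hx (hgsupp h))]
      simp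
  -- rewrite both sides via the distributional identity
  have hrwk : ∀ k, sInt ψ (Duk k i) = - ∫ x in Ω, uk k x * g x := by
    intro k
    have h := hDuk k i ψ ⟨hsm, hcs, hsub⟩
    have h' : ∫ x in Ω, uk k x * g x = - sInt ψ (Duk k i) := h
    linarith
  have hrw : sInt ψ (Du i) = - ∫ x in Ω, u x * g x := by
    have h := hDu i ψ ⟨hsm, hcs, hsub⟩
    have h' : ∫ x in Ω, u x * g x = - sInt ψ (Du i) := h
    linarith
  simp only [hrwk, hrw]
  refine Tendsto.neg ?_
  -- integrability of products
  have hgb : ∃ C, ∀ x, ‖g x‖ ≤ C := ⟨M, fun x => hM x⟩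
  have hintk : ∀ k, IntegrableOn (fun x => uk k x * g x) Ω := by
    intro k
    have := (huk k).bdd_mul (hgc.aestronglyMeasurable) (c := M) (Eventually.of_forall fun x => (show ‖g x‖ ≤ M from hM x))
    exact (by simpa [mul_comm] using this : Integrable (fun x => uk k x * g x) (volume.restrict Ω))
  have hintu : IntegrableOn (fun x => u x * g x) Ω := by
    have := hu.bdd_mul (hgc.aestronglyMeasurable) (c := M) (Eventually.of_forall fun x => (show ‖g x‖ ≤ M from hM x))
    exact (by simpa [mul_comm] using this : Integrable (fun x => u x * g x) (volume.restrict Ω))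
  rw [tendsto_iff_norm_sub_tendsto_zero]
  have hbound : ∀ k, ‖(∫ x in Ω, uk k x * g x) - ∫ x in Ω, u x * g x‖
      ≤ M * ∫ x in K, |uk k x - u x| := by
    intro k
    rw [← integral_sub (hintk k) hintu]
    have hptw : ∀ x, ‖uk k x * g x - u x * g x‖ ≤
        M * (K.indicator (fun y => |uk k y - u y|) x) := by
      intro x
      rw [← sub_mul, Real.norm_eq_abs, abs_mul]
      by_cases hx : x ∈ K
      · rw [indicator_of_mem hx]
        exact mul_le_mul_of_nonneg_left (hM x) (abs_nonneg _) |>.trans_eq (mul_comm _ _)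
          |>.trans_eq rfl |>.trans (le_refl _) |>.trans_eq rfl
      · rw [indicator_of_notMem hx, Function.notMem_support.mp (fun h => hx (hgsupp h)),
          abs_zero, mul_zero, mul_zero]
    calc ‖∫ x in Ω, (uk k x * g x - u x * g x)‖
        ≤ ∫ x in Ω, M * (K.indicator (fun y => |uk k y - u y|) x) := by
          refine norm_integral_le_of_norm_le ?_ (Eventually.of_forall hptw)
          exact ((((huk k).sub hu).norm.indicator hKm).const_mul M : _)
      _ = M * ∫ x in Ω, K.indicator (fun y => |uk k y - u y|) x := integral_const_mul M _
      _ = M * ∫ x in K, |uk k x - u x| := by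
          rw [setIntegral_indicator hKm, inter_eq_self_of_subset_right hsub]
  have htend : Tendsto (fun k => M * ∫ x in K, |uk k x - u x|) atTop (𝓝 0) := by
    have := (hL1loc K hsub hKc).const_mul M
    simpa using this
  exact squeeze_zero (fun k => norm_nonneg _) hbound htend

lemma smooth_urysohn {n : ℕ} {K U : Set (Eucl n)} (hK : IsCompact K) (hU : IsOpen U)
    (hKU : K ⊆ U) : ∃ ψ : Eucl n → ℝ, ContDiff ℝ (⊤ : ℕ∞) ψ ∧ HasCompactSupport ψ ∧
      tsupport ψ ⊆ U ∧ EqOn ψ 1 K ∧ ∀ x, ψ x ∈ Icc (0:ℝ) 1 := by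
  obtain ⟨L, hL, hKL, hLU⟩ := exists_compact_between hK hU hKU
  obtain ⟨f, hf0, hf1, hf01⟩ := exists_contMDiffMap_zero_one_of_isClosed (𝓘(ℝ, Eucl n))
    (isOpen_interior.isClosed_compl) hK.isClosed
    (disjoint_compl_left_iff.mpr hKL)
  have hsupp : tsupport f ⊆ L := by
    have h1 : Function.support f ⊆ interior L := by
      intro x hx
      by_contra hxL
      exact hx (hf0 hxL)
    calc tsupport f ⊆ closure (interior L) := closure_mono h1
    _ ⊆ L := closure_minimal interior_subset hL.isClosed
  refine ⟨f, contMDiff_iff_contDiff.mp f.contMDiff, ?_, hsupp.trans hLU, hf1, hf01⟩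
  exact HasCompactSupport.of_support_subset_isCompact hL (subset_tsupport f |>.trans hsupp)

lemma lsc {Ω : Set (Eucl n)} {u : Eucl n → ℝ} {uk : ℕ → Eucl n → ℝ}
    {Du : Fin n → SignedMeasure (Eucl n)} {Duk : ℕ → Fin n → SignedMeasure (Eucl n)}
    {ν : Measure (Eucl n)} {νk : ℕ → Measure (Eucl n)}
    (hu : IntegrableOn u Ω) (huk : ∀ k, IntegrableOn (uk k) Ω)
    (hDu : IsDistGrad Ω u Du) (hDuk : ∀ k, IsDistGrad Ω (uk k) (Duk k))
    (hν : IsVarMeasure Du ν) (hνk : ∀ k, IsVarMeasure (Duk k) (νk k))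
    (hfink : ∀ k, νk k Ω ≠ ⊤)
    (hL1loc : ∀ K : Set (Eucl n), K ⊆ Ω → IsCompact K →
      Tendsto (fun k => ∫ x in K, |uk k x - u x|) atTop (𝓝 0))
    {B : Set (Eucl n)} (hBΩ : B ⊆ Ω) (hB : IsOpen B) :
    ν B ≤ liminf (fun k => (νk k) B) atTop := by
  have hfinB : ∀ k, νk k B ≠ ⊤ :=
    fun k h => hfink k (top_le_iff.mp (h ▸ measure_mono hBΩ))
  rw [hν B hB.measurableSet]
  refine iSup_le fun P => iSup_le fun hPm => iSup_le fun hPd => iSup_le fun hPu => ?_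
  rw [ENNReal.tsum_eq_iSup_sum]
  refine iSup_le fun s => ?_
  refine ENNReal.le_of_forall_pos_le_add fun ε hε _ => ?_
  have hεR : (0:ℝ) < ε := hε
  set δ : ℝ := (ε : ℝ) / (2 * n * s.card + 2 * n + 1) with hδdef
  have hD : (0:ℝ) < 2 * n * s.card + 2 * n + 1 := by positivity
  have hδpos : 0 < δ := div_pos hεR hD
  have hδ0 : ENNReal.ofReal δ ≠ 0 := by
    simp [ENNReal.ofReal_eq_zero, not_le, hδpos]
  -- control measure
  set σ : Measure (Eucl n) := ∑ i : Fin n,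
    ((Du i).toJordanDecomposition.posPart + (Du i).toJordanDecomposition.negPart) with hσ
  haveI hσfin : IsFiniteMeasure σ := by
    constructor
    rw [hσ, Measure.finset_sum_apply]
    refine ENNReal.sum_lt_top.mpr fun i _ => by
      rw [Measure.add_apply]
      exact ENNReal.add_lt_top.mpr ⟨measure_lt_top _ _, measure_lt_top _ _⟩
  have hσp : ∀ (i : Fin n) (A : Set (Eucl n)),
      (Du i).toJordanDecomposition.posPart A ≤ σ A := by
    intro i A
    rw [hσ, Measure.finset_sum_apply]
    calc (Du i).toJordanDecomposition.posPart A
        ≤ ((Du i).toJordanDecomposition.posPart + (Du i).toJordanDecomposition.negPart) A := by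
          rw [Measure.add_apply]; exact le_self_add
      _ ≤ _ := Finset.single_le_sum (f := fun i =>
          ((Du i).toJordanDecomposition.posPart + (Du i).toJordanDecomposition.negPart) A)
          (fun _ _ => zero_le) (Finset.mem_univ i)
  have hσq : ∀ (i : Fin n) (A : Set (Eucl n)),
      (Du i).toJordanDecomposition.negPart A ≤ σ A := by
    intro i A
    rw [hσ, Measure.finset_sum_apply]
    calc (Du i).toJordanDecomposition.negPart A
        ≤ ((Du i).toJordanDecomposition.posPart + (Du i).toJordanDecomposition.negPart) A := by
          rw [Measure.add_apply]; exact le_add_self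
      _ ≤ _ := Finset.single_le_sum (f := fun i =>
          ((Du i).toJordanDecomposition.posPart + (Du i).toJordanDecomposition.negPart) A)
          (fun _ _ => zero_le) (Finset.mem_univ i)
  have hPB : ∀ j, P j ⊆ B := fun j => hPu ▸ subset_iUnion P j
  -- compact inner approximations
  have hKex : ∀ j : ℕ, ∃ K : Set (Eucl n), IsCompact K ∧ K ⊆ P j ∧
      σ (P j \ K) ≤ ENNReal.ofReal δ := by
    intro j
    obtain ⟨K, hKP, hKc, hlt⟩ := (hPm j).exists_isCompact_lt_add (μ := σ)
      (measure_ne_top σ _) hδ0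
    refine ⟨K, hKc, hKP, ?_⟩
    rw [measure_diff hKP hKc.isClosed.measurableSet.nullMeasurableSet (measure_ne_top _ _)]
    exact tsub_le_iff_left.mpr hlt.le
  choose K hKc hKP hKσ using hKex
  have hKm : ∀ j, MeasurableSet (K j) := fun j => (hKc j).isClosed.measurableSet
  have hKB : ∀ j, K j ⊆ B := fun j => (hKP j).trans (hPB j)
  have hKdisj : ∀ j m, j ≠ m → Disjoint (K j) (K m) :=
    fun j m h => ((hPd h).mono (hKP j) (hKP m) : _)
  -- open outer approximations inside B
  have hWex : ∀ j : ℕ, ∃ Wj : Set (Eucl n), IsOpen Wj ∧ K j ⊆ Wj ∧ Wj ⊆ B ∧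
      σ (Wj \ K j) ≤ ENNReal.ofReal δ := by
    intro j
    obtain ⟨W', hW'sup, hW'open, hW'lt⟩ := (K j).exists_isOpen_lt_add (μ := σ)
      (measure_ne_top σ _) hδ0
    refine ⟨W' ∩ B, hW'open.inter hB, subset_inter hW'sup (hKB j), inter_subset_right, ?_⟩
    refine le_trans (measure_mono (diff_subset_diff_left inter_subset_left)) ?_
    rw [measure_diff hW'sup (hKm j).nullMeasurableSet (measure_ne_top _ _)]
    exact tsub_le_iff_left.mpr hW'lt.le
  choose W hWopen hKW hWB hWσ using hWex
  -- disjointification radius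
  classical
  set pairs : Finset (ℕ × ℕ) := (s ×ˢ s).filter (fun p => p.1 ≠ p.2) with hpairs
  have hthick : ∀ p : ℕ × ℕ, ∃ d : ℝ, 0 < d ∧ (p.1 ≠ p.2 →
      Disjoint (thickening d (K p.1)) (thickening d (K p.2))) := by
    intro p
    rcases eq_or_ne p.1 p.2 with h | h
    · exact ⟨1, one_pos, fun h' => absurd h h'⟩
    · obtain ⟨d, hd, hdisj⟩ := (hKdisj _ _ h).exists_thickenings (hKc _) (hKc _).isClosed
      exact ⟨d, hd, fun _ => hdisj⟩
  choose df hdfpos hdf using hthick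
  set r : ℝ := if h : pairs.Nonempty then pairs.inf' h df else 1 with hr
  have hrpos : 0 < r := by
    rw [hr]
    split
    · exact (Finset.lt_inf'_iff _).mpr fun p _ => hdfpos p
    · exact one_pos
  have hrle : ∀ p ∈ pairs, r ≤ df p := by
    intro p hp
    rw [hr, dif_pos ⟨p, hp⟩]
    exact Finset.inf'_le _ hp
  -- final open sets
  set U : ℕ → Set (Eucl n) := fun j => W j ∩ thickening r (K j) with hU
  have hUopen : ∀ j, IsOpen (U j) := fun j => (hWopen j).inter isOpen_thickening
  have hKU : ∀ j, K j ⊆ U j := fun j =>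
    subset_inter (hKW j) (self_subset_thickening hrpos _)
  have hUB : ∀ j, U j ⊆ B := fun j => inter_subset_left.trans (hWB j)
  have hUσ : ∀ j, σ (U j \ K j) ≤ ENNReal.ofReal δ := fun j =>
    le_trans (measure_mono (diff_subset_diff_left inter_subset_left)) (hWσ j)
  have hUdisj : ∀ j ∈ s, ∀ m ∈ s, j ≠ m → Disjoint (U j) (U m) := by
    intro j hj m hm hne
    have hp : (j, m) ∈ pairs := by
      rw [hpairs, Finset.mem_filter, Finset.mem_product]
      exact ⟨⟨hj, hm⟩, hne⟩
    refine Disjoint.mono inter_subset_right inter_subset_right ?_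
    exact (hdf (j, m) hne).mono (thickening_mono (hrle _ hp) _) (thickening_mono (hrle _ hp) _)
  -- smooth bump functions
  have hψex : ∀ j : ℕ, ∃ ψ : Eucl n → ℝ, ContDiff ℝ (⊤ : ℕ∞) ψ ∧ HasCompactSupport ψ ∧
      tsupport ψ ⊆ U j ∧ EqOn ψ 1 (K j) ∧ ∀ x, ψ x ∈ Icc (0:ℝ) 1 :=
    fun j => smooth_urysohn (hKc j) (hUopen j) (hKU j)
  choose ψ hψsm hψcs hψsupp hψK hψ01 using hψex
  have hTest : ∀ j, IsTest Ω (ψ j) :=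
    fun j => ⟨hψsm j, hψcs j, (hψsupp j).trans ((hUB j).trans hBΩ)⟩
  have hψU : ∀ j, Function.support (ψ j) ⊆ U j :=
    fun j => (subset_tsupport _).trans (hψsupp j)
  -- unit directions
  set N : ℕ → ℝ := fun j => Real.sqrt (∑ i, ((Du i) (P j))^2) with hN
  set e : ℕ → Fin n → ℝ := fun j i => (N j)⁻¹ * (Du i) (P j) with he
  have hNnonneg : ∀ j, 0 ≤ N j := fun j => Real.sqrt_nonneg _
  have hSnn : ∀ j, (0:ℝ) ≤ ∑ i, ((Du i) (P j))^2 :=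
    fun j => Finset.sum_nonneg fun i _ => sq_nonneg _
  have hNsq : ∀ j, N j ^ 2 = ∑ i, ((Du i) (P j))^2 := fun j => Real.sq_sqrt (hSnn j)
  have he_dot : ∀ j, ∑ i, e j i * (Du i) (P j) = N j := by
    intro j
    have h1 : ∑ i, e j i * (Du i) (P j) = (N j)⁻¹ * ∑ i, ((Du i) (P j))^2 := by
      rw [Finset.mul_sum]
      exact Finset.sum_congr rfl fun i _ => by rw [he]; ring
    rcases eq_or_lt_of_le (hNnonneg j) with h0 | hpos
    · have hS0 : ∑ i, ((Du i) (P j))^2 = 0 := by rw [← hNsq j, ← h0]; ring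
      rw [h1, hS0, ← h0, mul_zero]
    · rw [h1, ← hNsq j, pow_two, ← mul_assoc, inv_mul_cancel₀ (ne_of_gt hpos), one_mul]
  have he_sq : ∀ j, ∑ i, (e j i)^2 ≤ 1 := by
    intro j
    have h1 : ∑ i, (e j i)^2 = ((N j)⁻¹)^2 * ∑ i, ((Du i) (P j))^2 := by
      rw [Finset.mul_sum]
      exact Finset.sum_congr rfl fun i _ => by rw [he]; ring
    rcases eq_or_lt_of_le (hNnonneg j) with h0 | hpos
    · rw [h1, ← h0]; simp
    · rw [h1, ← hNsq j, ← mul_pow, inv_mul_cancel₀ (ne_of_gt hpos), one_pow]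
  have he_abs : ∀ j i, |e j i| ≤ 1 := by
    intro j i
    rw [← sq_le_one_iff_abs_le_one]
    calc (e j i)^2 ≤ ∑ i', (e j i')^2 :=
        Finset.single_le_sum (f := fun i' => (e j i')^2) (fun _ _ => sq_nonneg _)
          (Finset.mem_univ i)
      _ ≤ 1 := he_sq j
  -- closeness of smeared values
  have hclose : ∀ j i, |sInt (ψ j) (Du i) - (Du i) (P j)| ≤ 2 * δ := by
    intro j i
    have hPK : MeasurableSet (P j \ K j) := (hPm j).diff (hKm j)
    have hUK : MeasurableSet (U j \ K j) := (hUopen j).measurableSet.diff (hKm j)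
    refine sInt_close (hψsm j).continuous (hψ01 j) (hψK j) (hKm j) (hPm j)
      (hUopen j).measurableSet (hKP j) (hψU j) ?_ ?_ ?_ ?_
    · exact ENNReal.toReal_le_of_le_ofReal hδpos.le ((hσp i _).trans (hKσ j))
    · exact ENNReal.toReal_le_of_le_ofReal hδpos.le ((hσp i _).trans (hUσ j))
    · exact ENNReal.toReal_le_of_le_ofReal hδpos.le ((hσq i _).trans (hKσ j))
    · exact ENNReal.toReal_le_of_le_ofReal hδpos.le ((hσq i _).trans (hUσ j))
  -- the smeared sums
  set c : ℝ := ∑ j ∈ s, ∑ i, e j i * sInt (ψ j) (Du i) with hc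
  set ck : ℕ → ℝ := fun k => ∑ j ∈ s, ∑ i, e j i * sInt (ψ j) (Duk k i) with hck
  -- claim 1
  have hclaim1 : ∑ j ∈ s, N j ≤ c + s.card * (2 * n * δ) := by
    have hperj : ∀ j ∈ s, N j ≤ (∑ i, e j i * sInt (ψ j) (Du i)) + 2 * n * δ := by
      intro j _
      have hsum : ∑ i, (e j i * (Du i) (P j) - e j i * sInt (ψ j) (Du i)) ≤ 2 * n * δ := by
        calc ∑ i, (e j i * (Du i) (P j) - e j i * sInt (ψ j) (Du i))
            ≤ ∑ _i : Fin n, 2 * δ := by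
              refine Finset.sum_le_sum fun i _ => ?_
              have h1 : e j i * (Du i) (P j) - e j i * sInt (ψ j) (Du i)
                  = e j i * ((Du i) (P j) - sInt (ψ j) (Du i)) := by ring
              rw [h1]
              calc e j i * ((Du i) (P j) - sInt (ψ j) (Du i))
                  ≤ |e j i * ((Du i) (P j) - sInt (ψ j) (Du i))| := le_abs_self _
                _ = |e j i| * |(Du i) (P j) - sInt (ψ j) (Du i)| := abs_mul _ _
                _ ≤ 1 * (2 * δ) := mul_le_mul (he_abs j i)
                    (by rw [abs_sub_comm]; exact hclose j i) (abs_nonneg _) zero_le_one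
                _ = 2 * δ := one_mul _
          _ = (n : ℝ) * (2 * δ) := by
              rw [Finset.sum_const, Finset.card_univ, Fintype.card_fin, nsmul_eq_mul]
          _ = 2 * n * δ := by ring
      rw [Finset.sum_sub_distrib, he_dot j] at hsum
      linarith
    calc ∑ j ∈ s, N j
        ≤ ∑ j ∈ s, ((∑ i, e j i * sInt (ψ j) (Du i)) + 2 * n * δ) := Finset.sum_le_sum hperj
      _ = c + s.card * (2 * n * δ) := by
          rw [Finset.sum_add_distrib, Finset.sum_const, nsmul_eq_mul, hc]
  -- claim 2
  have hclaim2 : ∀ k, ck k ≤ ((νk k) B).toReal := by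
    intro k
    have hterm : ∀ j ∈ s, ∑ i, e j i * sInt (ψ j) (Duk k i) ≤ ((νk k) (U j)).toReal := by
      intro j _
      refine dot_sInt_le (hνk k) (hψsm j).continuous (hψ01 j) (hψU j)
        (hUopen j).measurableSet ?_ (he_sq j)
      exact fun h => hfink k (top_le_iff.mp (h ▸ measure_mono ((hUB j).trans hBΩ)))
    calc ck k ≤ ∑ j ∈ s, ((νk k) (U j)).toReal := Finset.sum_le_sum hterm
      _ = (∑ j ∈ s, (νk k) (U j)).toReal := (ENNReal.toReal_sum fun j _ => fun h =>
          hfink k (top_le_iff.mp (h ▸ measure_mono ((hUB j).trans hBΩ)))).symm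
      _ = ((νk k) (⋃ j ∈ s, U j)).toReal := by
          rw [measure_biUnion_finset ?_ (fun j _ => (hUopen j).measurableSet)]
          intro j hj m hm hne
          exact hUdisj j hj m hm hne
      _ ≤ ((νk k) B).toReal := ENNReal.toReal_mono (hfinB k)
          (measure_mono (iUnion₂_subset fun j _ => hUB j))
  -- claim 3
  have hclaim3 : Tendsto ck atTop (𝓝 c) := by
    rw [hc, hck]  -- unfold? maybe unnecessary
    refine tendsto_finset_sum _ fun j _ => tendsto_finset_sum _ fun i _ => ?_
    exact ((sInt_tendsto hu huk hDu hDuk hL1loc (hTest j) i).const_mul (e j i))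
  -- pass to the limit
  have hc1 : ENNReal.ofReal c ≤ liminf (fun k => (νk k) B) atTop := by
    have h1 : Tendsto (fun k => ENNReal.ofReal (ck k)) atTop (𝓝 (ENNReal.ofReal c)) :=
      (ENNReal.continuous_ofReal.tendsto _).comp hclaim3
    have h2 : ∀ k, ENNReal.ofReal (ck k) ≤ (νk k) B := fun k =>
      le_trans (ENNReal.ofReal_le_ofReal (hclaim2 k))
        (le_of_eq (ENNReal.ofReal_toReal (hfinB k)))
    calc ENNReal.ofReal c = liminf (fun k => ENNReal.ofReal (ck k)) atTop := h1.liminf_eq.symm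
      _ ≤ _ := liminf_le_liminf (Eventually.of_forall h2)
  have hεbound : (s.card : ℝ) * (2 * n * δ) ≤ ε := by
    have h1 : (s.card : ℝ) * (2 * n * δ) = δ * (2 * n * s.card) := by ring
    have h2 : δ * (2 * n * s.card) ≤ δ * (2 * n * s.card + 2 * n + 1) := by
      refine mul_le_mul_of_nonneg_left ?_ hδpos.le
      linarith [Nat.cast_nonneg (α := ℝ) n]
    have h3 : δ * (2 * n * s.card + 2 * n + 1) = ε := by
      rw [hδdef, div_mul_cancel₀ _ (ne_of_gt hD)]
    linarith
  calc ∑ j ∈ s, ENNReal.ofReal (Real.sqrt (∑ i, ((Du i) (P j))^2))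
      = ENNReal.ofReal (∑ j ∈ s, N j) := by
        rw [ENNReal.ofReal_sum_of_nonneg fun j _ => hNnonneg j]
    _ ≤ ENNReal.ofReal (c + s.card * (2 * n * δ)) := ENNReal.ofReal_le_ofReal hclaim1
    _ ≤ ENNReal.ofReal c + ENNReal.ofReal (s.card * (2 * n * δ)) := ENNReal.ofReal_add_le
    _ ≤ liminf (fun k => (νk k) B) atTop + (ε : ℝ≥0∞) := by
        refine add_le_add hc1 ?_
        calc ENNReal.ofReal ((s.card : ℝ) * (2 * n * δ)) ≤ ENNReal.ofReal ε :=
            ENNReal.ofReal_le_ofReal hεbound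
          _ = (ε : ℝ≥0∞) := ENNReal.ofReal_coe_nnreal

theorem statement1_aux {Ω : Set (Eucl n)} (hΩ : IsOpen Ω)
    (u : Eucl n → ℝ) (uk : ℕ → Eucl n → ℝ)
    (Du : Fin n → SignedMeasure (Eucl n)) (Duk : ℕ → Fin n → SignedMeasure (Eucl n))
    (ν : Measure (Eucl n)) (νk : ℕ → Measure (Eucl n))
    (hu : IntegrableOn u Ω) (huk : ∀ k, IntegrableOn (uk k) Ω)
    (hDu : IsDistGrad Ω u Du) (hDuk : ∀ k, IsDistGrad Ω (uk k) (Duk k))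
    (hν : IsVarMeasure Du ν) (hνk : ∀ k, IsVarMeasure (Duk k) (νk k))
    (hfin : ν Ω ≠ ⊤) (hfink : ∀ k, νk k Ω ≠ ⊤)
    (hL1loc : ∀ K : Set (Eucl n), K ⊆ Ω → IsCompact K →
      Tendsto (fun k => ∫ x in K, |uk k x - u x|) atTop (𝓝 0))
    (hvar : Tendsto (fun k => νk k Ω) atTop (𝓝 (ν Ω))) :
    ∀ A : Set (Eucl n), A ⊆ Ω → IsOpen A →
      (Filter.limsup (fun k => νk k (closure A ∩ Ω)) atTop ≤ ν (closure A ∩ Ω)) ∧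
      (ν (frontier A ∩ Ω) = 0 → Tendsto (fun k => νk k A) atTop (𝓝 (ν A))) := by
  intro A hAΩ hA
  have hlsc : ∀ B : Set (Eucl n), B ⊆ Ω → IsOpen B →
      ν B ≤ liminf (fun k => (νk k) B) atTop :=
    fun B hBΩ hB => lsc hu huk hDu hDuk hν hνk hfink hL1loc hBΩ hB
  set C : Set (Eucl n) := closure A ∩ Ω with hC
  set Bo : Set (Eucl n) := Ω \ closure A with hBo
  have hBo_open : IsOpen Bo := hΩ.sdiff isClosed_closure
  have hBoΩ : Bo ⊆ Ω := diff_subset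
  have hCmeas : MeasurableSet C := isClosed_closure.measurableSet.inter hΩ.measurableSet
  have hsplit : ∀ μ : Measure (Eucl n), μ C + μ Bo = μ Ω := by
    intro μ
    have h := measure_inter_add_diff (μ := μ) (t := closure A) Ω
      isClosed_closure.measurableSet
    rwa [hC, hBo, inter_comm]
  have hνCfin : ν C ≠ ⊤ := fun h => hfin (top_le_iff.mp (h ▸ measure_mono inter_subset_right))
  have hνBofin : ν Bo ≠ ⊤ := fun h => hfin (top_le_iff.mp (h ▸ measure_mono hBoΩ))
  have parta : limsup (fun k => (νk k) C) atTop ≤ ν C := by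
    have key : ∀ ε : ℝ≥0∞, ε ≠ 0 → limsup (fun k => (νk k) C) atTop ≤ ν C + ε + ε := by
      intro ε hε0
      have h1 : ∀ᶠ k in atTop, (νk k) Ω ≤ ν Ω + ε :=
        hvar.eventually_le_const (ENNReal.lt_add_right hfin hε0)
      have h2 : ∀ᶠ k in atTop, ν Bo ≤ (νk k) Bo + ε := by
        rcases eq_or_ne (ν Bo) 0 with h0 | h0
        · exact Eventually.of_forall fun k => by rw [h0]; exact zero_le
        · have hlt : ν Bo - ε < liminf (fun k => (νk k) Bo) atTop :=
            lt_of_lt_of_le (ENNReal.sub_lt_self hνBofin h0 hε0) (hlsc Bo hBoΩ hBo_open)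
          filter_upwards [eventually_lt_of_lt_liminf hlt] with k hk
          exact tsub_le_iff_right.mp hk.le
      refine limsup_le_of_le ?_ ?_
      · isBoundedDefault
      filter_upwards [h1, h2] with k hk1 hk2
      have hfinkBo : (νk k) Bo ≠ ⊤ :=
        fun h => hfink k (top_le_iff.mp (h ▸ measure_mono hBoΩ))
      have hstep : (νk k) C + (νk k) Bo ≤ (ν C + ε + ε) + (νk k) Bo := by
        rw [hsplit (νk k)]
        calc (νk k) Ω ≤ ν Ω + ε := hk1
          _ = ν C + ν Bo + ε := by rw [hsplit ν]
          _ ≤ ν C + ((νk k) Bo + ε) + ε := by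
              exact add_le_add (add_le_add le_rfl hk2) le_rfl
          _ = (ν C + ε + ε) + (νk k) Bo := by ring
      exact (ENNReal.add_le_add_iff_right hfinkBo).mp hstep
    refine ENNReal.le_of_forall_pos_le_add fun ε hε hfin' => ?_
    have hε2 : ((ε : ℝ≥0∞) / 2) ≠ 0 := by
      simp [ENNReal.div_eq_zero_iff, (by exact_mod_cast hε.ne' : (ε : ℝ≥0∞) ≠ 0)]
    calc limsup (fun k => (νk k) C) atTop ≤ ν C + (ε : ℝ≥0∞)/2 + (ε : ℝ≥0∞)/2 := key _ hε2
      _ = ν C + ε := by rw [add_assoc, ENNReal.add_halves]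
  refine ⟨parta, ?_⟩
  intro hfr
  have hfrmeas : MeasurableSet (frontier A ∩ Ω) := by
    rw [hA.frontier_eq]
    exact ((isClosed_closure.measurableSet.diff hA.measurableSet)).inter hΩ.measurableSet
  have hCA : ν C = ν A := by
    have hdecomp : C = A ∪ (frontier A ∩ Ω) := by
      rw [hC, closure_eq_self_union_frontier, union_inter_distrib_right,
        inter_eq_self_of_subset_left hAΩ]
    have hdisj : Disjoint A (frontier A ∩ Ω) :=
      ((disjoint_frontier_iff_isOpen.mpr hA).symm.mono_right inter_subset_left)
    rw [hdecomp, measure_union hdisj hfrmeas, hfr, add_zero]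
  have hup : limsup (fun k => (νk k) A) atTop ≤ ν A := by
    refine le_trans (limsup_le_limsup (Eventually.of_forall fun k =>
      measure_mono (subset_inter subset_closure hAΩ)) ?_ ?_) (parta.trans_eq hCA)
    · isBoundedDefault
    · isBoundedDefault
  have hlow : ν A ≤ liminf (fun k => (νk k) A) atTop := hlsc A hAΩ hA
  have hll : liminf (fun k => (νk k) A) atTop ≤ limsup (fun k => (νk k) A) atTop :=
    liminf_le_limsup
  have h1 : liminf (fun k => (νk k) A) atTop = ν A :=
    le_antisymm (hll.trans hup) hlow
  have h2 : limsup (fun k => (νk k) A) atTop = ν A :=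
    le_antisymm hup (hlow.trans hll)
  exact tendsto_of_liminf_eq_limsup h1 h2

end StrictConvAux

/-- Semicontinuity of total variations under strict convergence (Lemma 2.7/Giusti 1.13). -/
theorem statement1 (n : ℕ) (Ω : Set (Eucl n)) (hΩ : IsOpen Ω)
    (u : Eucl n → ℝ) (uk : ℕ → Eucl n → ℝ)
    (Du : Fin n → SignedMeasure (Eucl n)) (Duk : ℕ → Fin n → SignedMeasure (Eucl n))
    (ν : Measure (Eucl n)) (νk : ℕ → Measure (Eucl n))
    (hu : IntegrableOn u Ω) (huk : ∀ k, IntegrableOn (uk k) Ω)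
    (hDu : IsDistGrad Ω u Du) (hDuk : ∀ k, IsDistGrad Ω (uk k) (Duk k))
    (hν : IsVarMeasure Du ν) (hνk : ∀ k, IsVarMeasure (Duk k) (νk k))
    (hfin : ν Ω ≠ ⊤) (hfink : ∀ k, νk k Ω ≠ ⊤)
    (hL1loc : ∀ K : Set (Eucl n), K ⊆ Ω → IsCompact K →
      Tendsto (fun k => ∫ x in K, |uk k x - u x|) atTop (𝓝 0))
    (hvar : Tendsto (fun k => νk k Ω) atTop (𝓝 (ν Ω))) :
    ∀ A : Set (Eucl n), A ⊆ Ω → IsOpen A →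
      (Filter.limsup (fun k => νk k (closure A ∩ Ω)) atTop ≤ ν (closure A ∩ Ω)) ∧
      (ν (frontier A ∩ Ω) = 0 → Tendsto (fun k => νk k A) atTop (𝓝 (ν A))) :=
  StrictConvAux.statement1_aux hΩ u uk Du Duk ν νk hu huk hDu hDuk hν hνk hfin hfink hL1loc hvar
end
end

section
/- A distribution T on ℝⁿ belongs to the dual of the homogeneous Sobolev space Ẇ^{1,1}(ℝⁿ) if and only if T = div F for some F ∈ L^∞(ℝⁿ, ℝⁿ). Moreover ‖T‖_{Ẇ^{1,1}(ℝⁿ)*} = min{‖F‖_{L^∞} : div F = T}, where the minimum is attained. -/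
open MeasureTheory Topology Filter Set Metric
open scoped ENNReal NNReal RealInnerProductSpace

noncomputable section

open BVPaper

namespace BVPaper
variable {n : ℕ}

lemma gradient_def (φ : Eucl n → ℝ) (x : Eucl n) :
    gradient φ x = (InnerProductSpace.toDual ℝ (Eucl n)).symm (fderiv ℝ φ x) := rfl

lemma norm_gradient (φ : Eucl n → ℝ) (x : Eucl n) :
    ‖gradient φ x‖ = ‖fderiv ℝ φ x‖ := by
  rw [gradient_def]
  exact LinearIsometryEquiv.norm_map _ _

lemma inner_gradient (φ : Eucl n → ℝ) (x v : Eucl n) :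
    (inner ℝ v (gradient φ x) : ℝ) = fderiv ℝ φ x v := by
  rw [gradient_def, real_inner_comm]
  exact InnerProductSpace.toDual_symm_apply

lemma isTest_zero : IsTest (Set.univ) (0 : Eucl n → ℝ) := by
  refine ⟨contDiff_const, ?_, subset_univ _⟩
  rw [HasCompactSupport]
  simp [tsupport, Function.support]

lemma IsTest.contDiff' {φ : Eucl n → ℝ} (h : IsTest Set.univ φ) : ContDiff ℝ (⊤ : ℕ∞) φ := h.1
lemma IsTest.hcs {φ : Eucl n → ℝ} (h : IsTest Set.univ φ) : HasCompactSupport φ := h.2.1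

lemma IsTest.smul_add {φ ψ : Eucl n → ℝ} (hφ : IsTest Set.univ φ) (hψ : IsTest Set.univ ψ)
    (a b : ℝ) : IsTest Set.univ (a • φ + b • ψ) := by
  refine ⟨(hφ.1.const_smul a).add (hψ.1.const_smul b), ?_, subset_univ _⟩
  exact (hφ.2.1.smul_left (M := ℝ)).add (hψ.2.1.smul_left (M := ℝ))

lemma IsTest.differentiable {φ : Eucl n → ℝ} (h : IsTest Set.univ φ) : Differentiable ℝ φ :=
  h.1.differentiable (by simp)

lemma gradient_smul_add {φ ψ : Eucl n → ℝ} (hφ : IsTest Set.univ φ) (hψ : IsTest Set.univ ψ)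
    (a b : ℝ) (x : Eucl n) :
    gradient (a • φ + b • ψ) x = a • gradient φ x + b • gradient ψ x := by
  have h1 : HasFDerivAt (fun y => a • φ y + b • ψ y)
      (a • fderiv ℝ φ x + b • fderiv ℝ ψ x) x :=
    ((hφ.differentiable x).hasFDerivAt.const_smul a).add
      ((hψ.differentiable x).hasFDerivAt.const_smul b)
  have h2 : fderiv ℝ (a • φ + b • ψ) x = a • fderiv ℝ φ x + b • fderiv ℝ ψ x := h1.fderiv
  simp [gradient_def, h2]

lemma IsTest.grad_continuous {φ : Eucl n → ℝ} (h : IsTest Set.univ φ) :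
    Continuous (gradient φ) := by
  have : Continuous (fderiv ℝ φ) := h.1.continuous_fderiv (by simp)
  exact (InnerProductSpace.toDual ℝ (Eucl n)).symm.continuous.comp this

lemma IsTest.grad_hcs {φ : Eucl n → ℝ} (h : IsTest Set.univ φ) :
    HasCompactSupport (gradient φ) := by
  have h1 : HasCompactSupport (fderiv ℝ φ) := h.hcs.fderiv ℝ
  have h2 : gradient φ = fun x => (InnerProductSpace.toDual ℝ (Eucl n)).symm (fderiv ℝ φ x) := rfl
  rw [h2]
  exact h1.comp_left (by simp)

lemma IsTest.grad_integrable {φ : Eucl n → ℝ} (h : IsTest Set.univ φ) :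
    Integrable (gradient φ) (volume : Measure (Eucl n)) :=
  h.grad_continuous.integrable_of_hasCompactSupport h.grad_hcs


variable {T : (Eucl n → ℝ) → ℝ}

lemma T_add (hT : TestLinear T) {φ ψ : Eucl n → ℝ} (hφ : IsTest Set.univ φ)
    (hψ : IsTest Set.univ ψ) : T (φ + ψ) = T φ + T ψ := by
  have := hT φ ψ hφ hψ 1 1
  simpa using this

lemma T_smul (hT : TestLinear T) {φ : Eucl n → ℝ} (hφ : IsTest Set.univ φ) (c : ℝ) :
    T (c • φ) = c * T φ := by
  have := hT φ 0 hφ isTest_zero c 0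
  simpa using this

lemma T_zero (hT : TestLinear T) : T 0 = 0 := by
  have := hT 0 0 isTest_zero isTest_zero 0 0
  simpa using this

/-- The easy estimate: if `T = div F` with `F` essentially bounded. -/
lemma abs_T_le_of_isDivOf {F : Eucl n → Eucl n} (hF : AEStronglyMeasurable F volume)
    (hFtop : eLpNorm F ⊤ volume ≠ ⊤) (hdiv : IsDivOf F T) {φ : Eucl n → ℝ}
    (hφ : IsTest Set.univ φ) :
    |T φ| ≤ (eLpNorm F ⊤ volume).toReal * ∫ x, ‖gradient φ x‖ := by
  set C := (eLpNorm F ⊤ volume).toReal with hC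
  have hbd : ∀ᵐ x ∂(volume : Measure (Eucl n)), ‖F x‖ ≤ C := by
    have h1 : ∀ᵐ x ∂(volume : Measure (Eucl n)),
        (‖F x‖₊ : ℝ≥0∞) ≤ eLpNormEssSup F volume := ae_le_eLpNormEssSup
    filter_upwards [h1] with x hx
    have hx' : (‖F x‖₊ : ℝ≥0∞) ≤ eLpNorm F ⊤ volume := by
      rwa [eLpNorm_exponent_top]
    have := ENNReal.toReal_mono hFtop hx'
    simpa [hC, eLpNorm_exponent_top] using this
  have hmeas : AEStronglyMeasurable (fun x => (inner ℝ (F x) (gradient φ x) : ℝ)) volume :=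
    hF.inner hφ.grad_continuous.aestronglyMeasurable
  have hintbd : ∀ᵐ x ∂(volume : Measure (Eucl n)),
      ‖(inner ℝ (F x) (gradient φ x) : ℝ)‖ ≤ C * ‖gradient φ x‖ := by
    filter_upwards [hbd] with x hx
    calc ‖(inner ℝ (F x) (gradient φ x) : ℝ)‖ ≤ ‖F x‖ * ‖gradient φ x‖ := by
          rw [Real.norm_eq_abs]; exact abs_real_inner_le_norm _ _
      _ ≤ C * ‖gradient φ x‖ := by
          exact mul_le_mul_of_nonneg_right hx (norm_nonneg _)
  have hint : Integrable (fun x => (inner ℝ (F x) (gradient φ x) : ℝ)) volume :=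
    Integrable.mono' (hφ.grad_integrable.norm.const_mul C) hmeas hintbd
  rw [hdiv φ hφ, abs_neg, ← Real.norm_eq_abs]
  calc ‖∫ x, (inner ℝ (F x) (gradient φ x) : ℝ)‖ ≤ ∫ x, ‖(inner ℝ (F x) (gradient φ x) : ℝ)‖ :=
        norm_integral_le_integral_norm _
    _ ≤ ∫ x, C * ‖gradient φ x‖ :=
        integral_mono_ae hint.norm (hφ.grad_integrable.norm.const_mul C) hintbd
    _ = C * ∫ x, ‖gradient φ x‖ := integral_const_mul _ _

lemma ofReal_integral_norm_grad {φ : Eucl n → ℝ} (hφ : IsTest Set.univ φ) :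
    ENNReal.ofReal (∫ x, ‖gradient φ x‖) = ∫⁻ x, (‖gradient φ x‖₊ : ℝ≥0∞) :=
  ofReal_integral_norm_eq_lintegral_enorm hφ.grad_integrable

/-- From a uniform bound with nonneg constant to a bound on the dual norm. -/
lemma distNorm_le_of_bound {C : ℝ} (hC0 : 0 ≤ C)
    (h : ∀ φ : Eucl n → ℝ, IsTest Set.univ φ → |T φ| ≤ C * ∫ x, ‖gradient φ x‖) :
    distNormW11 T ≤ ENNReal.ofReal C := by
  refine iSup₂_le fun φ hφ => ?_
  set D := ∫⁻ x, (‖gradient φ x‖₊ : ℝ≥0∞) with hD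
  have hDof : ENNReal.ofReal (∫ x, ‖gradient φ x‖) = D := ofReal_integral_norm_grad hφ
  by_cases hD0 : D = 0
  · have hi0 : (∫ x, ‖gradient φ x‖) = 0 := by
      have h1 : ENNReal.ofReal (∫ x, ‖gradient φ x‖) = 0 := by rw [hDof, hD0]
      have h2 : (0:ℝ) ≤ ∫ x, ‖gradient φ x‖ := integral_nonneg fun x => norm_nonneg _
      rw [ENNReal.ofReal_eq_zero] at h1
      exact le_antisymm h1 h2
    have hT0 : |T φ| = 0 := le_antisymm (by simpa [hi0] using h φ hφ) (abs_nonneg _)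
    simp [hD0, hT0]
  · have h1 : ENNReal.ofReal |T φ| ≤ ENNReal.ofReal C * D := by
      calc ENNReal.ofReal |T φ| ≤ ENNReal.ofReal (C * ∫ x, ‖gradient φ x‖) :=
            ENNReal.ofReal_le_ofReal (h φ hφ)
        _ = ENNReal.ofReal C * D := by
            rw [ENNReal.ofReal_mul hC0, hDof]
    exact ENNReal.div_le_of_le_mul h1

/-- Minimality: any `L∞` vector field `F'` with `div F' = T` dominates the dual norm. -/
lemma distNorm_le_eLpNorm {F : Eucl n → Eucl n} (hF : AEStronglyMeasurable F volume)
    (hdiv : IsDivOf F T) : distNormW11 T ≤ eLpNorm F ⊤ volume := by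
  by_cases htop : eLpNorm F ⊤ volume = ⊤
  · simp [htop]
  · have h := distNorm_le_of_bound ENNReal.toReal_nonneg
      (fun φ hφ => abs_T_le_of_isDivOf hF htop hdiv hφ)
    rwa [ENNReal.ofReal_toReal htop] at h

lemma distNorm_ne_top (hC : ∃ C : ℝ, ∀ φ : Eucl n → ℝ, IsTest Set.univ φ →
    |T φ| ≤ C * ∫ x, ‖gradient φ x‖) : distNormW11 T ≠ ⊤ := by
  obtain ⟨C, h⟩ := hC
  have h' : ∀ φ : Eucl n → ℝ, IsTest Set.univ φ →
      |T φ| ≤ (max C 0) * ∫ x, ‖gradient φ x‖ := fun φ hφ =>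
    (h φ hφ).trans (mul_le_mul_of_nonneg_right (le_max_left _ _)
      (integral_nonneg fun x => norm_nonneg _))
  exact ne_top_of_le_ne_top ENNReal.ofReal_ne_top (distNorm_le_of_bound (le_max_right _ _) h')

/-- The sharp bound with the dual norm as constant. -/
lemma abs_T_le_distNorm (hC : ∃ C : ℝ, ∀ φ : Eucl n → ℝ, IsTest Set.univ φ →
    |T φ| ≤ C * ∫ x, ‖gradient φ x‖) {φ : Eucl n → ℝ} (hφ : IsTest Set.univ φ) :
    |T φ| ≤ (distNormW11 T).toReal * ∫ x, ‖gradient φ x‖ := by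
  obtain ⟨C, h⟩ := hC
  set D := ∫⁻ x, (‖gradient φ x‖₊ : ℝ≥0∞) with hD
  have hDof : ENNReal.ofReal (∫ x, ‖gradient φ x‖) = D := ofReal_integral_norm_grad hφ
  have hNtop : distNormW11 T ≠ ⊤ := distNorm_ne_top ⟨C, h⟩
  by_cases hD0 : D = 0
  · have hi0 : (∫ x, ‖gradient φ x‖) = 0 := by
      have h1 : ENNReal.ofReal (∫ x, ‖gradient φ x‖) = 0 := by rw [hDof, hD0]
      have h2 : (0:ℝ) ≤ ∫ x, ‖gradient φ x‖ := integral_nonneg fun x => norm_nonneg _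
      rw [ENNReal.ofReal_eq_zero] at h1
      exact le_antisymm h1 h2
    have hT0 : |T φ| ≤ 0 := by simpa [hi0] using h φ hφ
    simpa [hi0] using hT0
  · have hle : ENNReal.ofReal |T φ| / D ≤ distNormW11 T :=
      le_iSup₂ (f := fun (φ : Eucl n → ℝ) (_ : IsTest Set.univ φ) =>
        ENNReal.ofReal |T φ| / ∫⁻ x, (‖gradient φ x‖₊ : ℝ≥0∞)) φ hφ
    have hDtop : D ≠ ⊤ := by rw [← hDof]; exact ENNReal.ofReal_ne_top
    have h2 : ENNReal.ofReal |T φ| ≤ distNormW11 T * D := by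
      rwa [ENNReal.div_le_iff hD0 hDtop] at hle
    have h3 := ENNReal.toReal_mono (by
      exact ENNReal.mul_ne_top hNtop hDtop) h2
    rwa [ENNReal.toReal_ofReal (abs_nonneg _), ENNReal.toReal_mul, ← hDof,
      ENNReal.toReal_ofReal (integral_nonneg fun x => norm_nonneg _)] at h3

/-- Well-definedness: `T` depends only on the a.e. gradient. -/
lemma T_eq_of_grad_ae (hT : TestLinear T)
    (hC : ∃ C : ℝ, ∀ φ : Eucl n → ℝ, IsTest Set.univ φ → |T φ| ≤ C * ∫ x, ‖gradient φ x‖)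
    {φ ψ : Eucl n → ℝ} (hφ : IsTest Set.univ φ) (hψ : IsTest Set.univ ψ)
    (hae : gradient φ =ᵐ[(volume : Measure (Eucl n))] gradient ψ) : T φ = T ψ := by
  obtain ⟨C, h⟩ := hC
  set χ := (1:ℝ) • φ + (-1:ℝ) • ψ with hχ
  have hχt : IsTest Set.univ χ := hφ.smul_add hψ 1 (-1)
  have hTχ : T χ = T φ - T ψ := by
    have h2 := hT φ ψ hφ hψ 1 (-1)
    rw [hχ, h2]; ring
  have hgrad0 : gradient χ =ᵐ[(volume : Measure (Eucl n))] 0 := by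
    filter_upwards [hae] with x hx
    rw [hχ, gradient_smul_add hφ hψ 1 (-1) x]
    simp [hx]
  have hint0 : (∫ x, ‖gradient χ x‖) = 0 := by
    have : (fun x => ‖gradient χ x‖) =ᵐ[(volume : Measure (Eucl n))] 0 := by
      filter_upwards [hgrad0] with x hx; simp [hx]
    rw [integral_congr_ae this]; simp
  have := h χ hχt
  rw [hint0, mul_zero] at this
  have : T χ = 0 := le_antisymm (le_of_abs_le this) (by
    have := neg_abs_le (T χ); linarith [abs_nonneg (T χ), le_of_abs_le ‹|T χ| ≤ 0›])
  rw [hTχ] at this; linarith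


/-- Transfer an a.e. equality w.r.t. a restricted measure through an indicator. -/
lemma indicator_ae_of_restrict_ae {α E : Type*} [MeasurableSpace α] [NormedAddCommGroup E]
    {μ : Measure α} {B : Set α} (hB : MeasurableSet B) {f g : α → E}
    (h : f =ᵐ[μ.restrict B] g) : B.indicator f =ᵐ[μ] B.indicator g := by
  have h0 : μ ({x | f x ≠ g x} ∩ B) = 0 := by
    rw [← Measure.restrict_apply' hB]
    exact h
  rw [Filter.EventuallyEq, ae_iff]
  refine measure_mono_null (fun x hx => ?_) h0
  simp only [Set.mem_setOf_eq] at hx ⊢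
  by_cases hxB : x ∈ B
  · rw [Set.indicator_of_mem hxB, Set.indicator_of_mem hxB] at hx
    exact ⟨hx, hxB⟩
  · rw [Set.indicator_of_notMem hxB, Set.indicator_of_notMem hxB] at hx
    exact absurd rfl hx

lemma toReal_eLpNorm_one {α E : Type*} [MeasurableSpace α] [NormedAddCommGroup E]
    {μ : Measure α} {f : α → E} (hf : Integrable f μ) :
    (eLpNorm f 1 μ).toReal = ∫ x, ‖f x‖ ∂μ := by
  rw [eLpNorm_one_eq_lintegral_enorm, ← ofReal_integral_norm_eq_lintegral_enorm hf,
    ENNReal.toReal_ofReal (integral_nonneg fun x => norm_nonneg _)]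

lemma toLp_finset_sum {α E : Type*} [MeasurableSpace α] [NormedAddCommGroup E]
    {μ : Measure α} {p : ℝ≥0∞} {ι : Type*} (s : Finset ι) {f : ι → α → E}
    (hf : ∀ i, MemLp (f i) p μ) :
    (memLp_finset_sum' s (fun i _ => hf i)).toLp (∑ i ∈ s, f i)
      = ∑ i ∈ s, (hf i).toLp (f i) := by
  classical
  induction s using Finset.induction_on with
  | empty => simp
  | insert a s hnot ih =>
    have h1 : (memLp_finset_sum' (insert a s) (fun i _ => hf i)).toLp (∑ i ∈ insert a s, f i)
        = ((hf a).add (memLp_finset_sum' s (fun i _ => hf i))).toLp (f a + ∑ i ∈ s, f i) :=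
      MemLp.toLp_congr _ _ (by rw [Finset.sum_insert hnot])
    rw [h1, MemLp.toLp_add (hf a) (memLp_finset_sum' s (fun i _ => hf i)), ih, Finset.sum_insert hnot]

lemma inner_grad_integrable' {F : Eucl n → Eucl n} (hF : AEStronglyMeasurable F volume)
    {C : ℝ} (hbd : ∀ᵐ x ∂(volume : Measure (Eucl n)), ‖F x‖ ≤ C) {φ : Eucl n → ℝ}
    (hφ : IsTest Set.univ φ) :
    Integrable (fun x => (inner ℝ (F x) (gradient φ x) : ℝ)) volume := by
  have hmeas : AEStronglyMeasurable (fun x => (inner ℝ (F x) (gradient φ x) : ℝ)) volume :=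
    hF.inner hφ.grad_continuous.aestronglyMeasurable
  refine Integrable.mono' (hφ.grad_integrable.norm.const_mul C) hmeas ?_
  filter_upwards [hbd] with x hx
  calc ‖(inner ℝ (F x) (gradient φ x) : ℝ)‖ ≤ ‖F x‖ * ‖gradient φ x‖ := by
        rw [Real.norm_eq_abs]; exact abs_real_inner_le_norm _ _
    _ ≤ C * ‖gradient φ x‖ := mul_le_mul_of_nonneg_right hx (norm_nonneg _)


set_option maxHeartbeats 1000000 in
/-- Riesz representation of a continuous functional on `L¹` over a finite-measure piece,
obtained through the `L²` theory. -/
lemma ball_rep (Λ : Lp (Eucl n) 1 (volume : Measure (Eucl n)) →L[ℝ] ℝ) {B : Set (Eucl n)}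
    (hB : MeasurableSet B) (hBfin : volume B ≠ ⊤) :
    ∃ Fm : Lp (Eucl n) 2 (volume.restrict B),
      (∀ᵐ x ∂(volume.restrict B), ‖(Fm : Eucl n → Eucl n) x‖ ≤ ‖Λ‖) ∧
      ∀ (g : Eucl n → Eucl n) (hg2 : MemLp g 2 (volume.restrict B))
        (hg1 : MemLp (B.indicator g) 1 (volume : Measure (Eucl n))),
        Λ (hg1.toLp _) = ∫ x, (inner ℝ ((Fm : Eucl n → Eucl n) x) (g x) : ℝ)
          ∂(volume.restrict B) := by
  classical
  set μB := volume.restrict B with hμB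
  haveI : IsFiniteMeasure μB :=
    ⟨by rw [hμB, Measure.restrict_apply_univ]; exact lt_of_le_of_ne le_top hBfin⟩
  have mem1 : ∀ g : Eucl n → Eucl n, MemLp g 2 μB →
      MemLp (B.indicator g) 1 (volume : Measure (Eucl n)) := by
    intro g hg
    have hint : Integrable g μB :=
      memLp_one_iff_integrable.mp (hg.mono_exponent one_le_two)
    exact memLp_one_iff_integrable.mpr ((integrable_indicator_iff hB).mpr hint)
  -- the functional on L²(B)
  set e : ℝ := 1 / (1:ℝ≥0∞).toReal - 1 / (2:ℝ≥0∞).toReal with he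
  have he0 : 0 ≤ e := by rw [he]; norm_num
  have hc_ne_top : (volume B) ^ e ≠ ⊤ := ENNReal.rpow_ne_top_of_nonneg he0 hBfin
  have hnorm_toLp_le : ∀ h : Lp (Eucl n) 2 μB,
      ‖(mem1 _ (Lp.memLp h)).toLp _‖ ≤ ((volume B) ^ e).toReal * ‖h‖ := by
    intro h
    rw [Lp.norm_toLp, Lp.norm_def]
    have h1 : eLpNorm (B.indicator (⇑h)) 1 (volume : Measure (Eucl n))
        = eLpNorm (⇑h) 1 μB := eLpNorm_indicator_eq_eLpNorm_restrict hB
    have h2 : eLpNorm (⇑h) 1 μB ≤ eLpNorm (⇑h) 2 μB * (μB Set.univ) ^ e :=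
      eLpNorm_le_eLpNorm_mul_rpow_measure_univ one_le_two (Lp.aestronglyMeasurable h)
    have h3 : μB Set.univ = volume B := by rw [hμB, Measure.restrict_apply_univ]
    have h4 : eLpNorm (B.indicator (⇑h)) 1 (volume : Measure (Eucl n))
        ≤ (volume B) ^ e * eLpNorm (⇑h) 2 μB := by
      rw [h1]; rw [h3] at h2; rwa [mul_comm] at h2
    have h5 := ENNReal.toReal_mono
      (ENNReal.mul_ne_top hc_ne_top (Lp.eLpNorm_ne_top h)) h4
    rwa [ENNReal.toReal_mul] at h5
  set ℓlin : Lp (Eucl n) 2 μB →ₗ[ℝ] ℝ :=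
    { toFun := fun h => Λ ((mem1 _ (Lp.memLp h)).toLp _)
      map_add' := by
        intro h h'
        have hae : B.indicator (⇑(h + h')) =ᵐ[(volume : Measure (Eucl n))]
            B.indicator (⇑h) + B.indicator (⇑h') := by
          refine (indicator_ae_of_restrict_ae hB (Lp.coeFn_add h h')).trans ?_
          refine Filter.EventuallyEq.of_eq (funext fun x => ?_)
          by_cases hx : x ∈ B <;>
            simp [Set.indicator_of_mem, Set.indicator_of_notMem, hx]
        have : (mem1 _ (Lp.memLp (h + h'))).toLp _
            = ((mem1 _ (Lp.memLp h)).add (mem1 _ (Lp.memLp h'))).toLp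
              (B.indicator (⇑h) + B.indicator (⇑h')) := MemLp.toLp_congr _ _ hae
        rw [this, MemLp.toLp_add, map_add]
      map_smul' := by
        intro c h
        have hae : B.indicator (⇑(c • h)) =ᵐ[(volume : Measure (Eucl n))]
            c • B.indicator (⇑h) := by
          refine (indicator_ae_of_restrict_ae hB (Lp.coeFn_smul c h)).trans ?_
          refine Filter.EventuallyEq.of_eq (funext fun x => ?_)
          by_cases hx : x ∈ B <;>
            simp [Set.indicator_of_mem, Set.indicator_of_notMem, hx]
        have : (mem1 _ (Lp.memLp (c • h))).toLp _
            = ((mem1 _ (Lp.memLp h)).const_smul c).toLp (c • B.indicator (⇑h)) :=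
          MemLp.toLp_congr _ _ hae
        rw [this, MemLp.toLp_const_smul c (mem1 _ (Lp.memLp h)), _root_.map_smul]
        simp }
  have hbound : ∀ h : Lp (Eucl n) 2 μB, ‖ℓlin h‖ ≤ (‖Λ‖ * ((volume B) ^ e).toReal) * ‖h‖ := by
    intro h
    calc ‖ℓlin h‖ ≤ ‖Λ‖ * ‖(mem1 _ (Lp.memLp h)).toLp _‖ := Λ.le_opNorm _
      _ ≤ ‖Λ‖ * (((volume B) ^ e).toReal * ‖h‖) :=
          mul_le_mul_of_nonneg_left (hnorm_toLp_le h) (norm_nonneg Λ)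
      _ = (‖Λ‖ * ((volume B) ^ e).toReal) * ‖h‖ := by ring
  set ℓ : Lp (Eucl n) 2 μB →L[ℝ] ℝ := ℓlin.mkContinuous _ hbound with hℓ
  set Fm : Lp (Eucl n) 2 μB := (InnerProductSpace.toDual ℝ (Lp (Eucl n) 2 μB)).symm ℓ with hFm
  have hrep : ∀ h : Lp (Eucl n) 2 μB,
      Λ ((mem1 _ (Lp.memLp h)).toLp _)
        = ∫ x, (inner ℝ ((Fm : Eucl n → Eucl n) x) ((h : Eucl n → Eucl n) x) : ℝ) ∂μB := by
    intro h
    have h1 : (inner ℝ Fm h : ℝ) = ℓ h := InnerProductSpace.toDual_symm_apply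
    have h2 : (inner ℝ Fm h : ℝ)
        = ∫ x, (inner ℝ ((Fm : Eucl n → Eucl n) x) ((h : Eucl n → Eucl n) x) : ℝ) ∂μB :=
      L2.inner_def Fm h
    have h3 : ℓ h = ℓlin h := rfl
    rw [← h2, h1, h3]
    rfl
  -- the general representation property
  have hrep' : ∀ (g : Eucl n → Eucl n) (hg2 : MemLp g 2 μB)
      (hg1 : MemLp (B.indicator g) 1 (volume : Measure (Eucl n))),
      Λ (hg1.toLp _) = ∫ x, (inner ℝ ((Fm : Eucl n → Eucl n) x) (g x) : ℝ) ∂μB := by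
    intro g hg2 hg1
    set h : Lp (Eucl n) 2 μB := hg2.toLp g with hh
    have hcoe : (h : Eucl n → Eucl n) =ᵐ[μB] g := MemLp.coeFn_toLp hg2
    have h1 : hg1.toLp _ = (mem1 _ (Lp.memLp h)).toLp _ :=
      MemLp.toLp_congr _ _ (indicator_ae_of_restrict_ae hB hcoe.symm)
    rw [h1, hrep h]
    refine integral_congr_ae ?_
    filter_upwards [hcoe] with x hx
    rw [hx]
  refine ⟨Fm, ?_, hrep'⟩
  -- the essential bound
  have hFm_norm_int : Integrable (fun x => ‖(Fm : Eucl n → Eucl n) x‖) μB :=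
    memLp_one_iff_integrable.mp ((Lp.memLp Fm).norm.mono_exponent one_le_two)
  have hFm_sq_int : Integrable (fun x => ‖(Fm : Eucl n → Eucl n) x‖ ^ 2) μB := by
    refine (L2.integrable_inner (𝕜 := ℝ) Fm Fm).congr ?_
    refine Filter.EventuallyEq.of_eq (funext fun x => ?_)
    exact real_inner_self_eq_norm_sq _
  have key : ∀ s : Set (Eucl n), MeasurableSet s →
      ∫ x in s, ‖(Fm : Eucl n → Eucl n) x‖ ^ 2 ∂μB
        ≤ ‖Λ‖ * ∫ x in s, ‖(Fm : Eucl n → Eucl n) x‖ ∂μB := by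
    intro s hs
    have hs2 : MemLp (s.indicator (⇑Fm)) 2 μB := (Lp.memLp Fm).indicator hs
    have happ := hrep' (s.indicator (⇑Fm)) hs2 (mem1 _ hs2)
    have hRHS : ∫ x, (inner ℝ ((Fm : Eucl n → Eucl n) x) (s.indicator (⇑Fm) x) : ℝ) ∂μB
        = ∫ x in s, ‖(Fm : Eucl n → Eucl n) x‖ ^ 2 ∂μB := by
      rw [← integral_indicator hs]
      refine integral_congr_ae (Filter.EventuallyEq.of_eq (funext fun x => ?_))
      by_cases hx : x ∈ s
      · simp only [Set.indicator_of_mem hx]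
        exact real_inner_self_eq_norm_sq _
      · simp [Set.indicator_of_notMem hx]
    have hLHS : |Λ ((mem1 _ hs2).toLp _)|
        ≤ ‖Λ‖ * ∫ x in s, ‖(Fm : Eucl n → Eucl n) x‖ ∂μB := by
      have h1 : ‖Λ ((mem1 _ hs2).toLp _)‖ ≤ ‖Λ‖ * ‖(mem1 _ hs2).toLp _‖ := Λ.le_opNorm _
      have h2 : ‖(mem1 _ hs2).toLp _‖ = ∫ x in s, ‖(Fm : Eucl n → Eucl n) x‖ ∂μB := by
        rw [Lp.norm_toLp]
        rw [eLpNorm_indicator_eq_eLpNorm_restrict hB]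
        rw [toReal_eLpNorm_one (memLp_one_iff_integrable.mp
          (hs2.mono_exponent one_le_two))]
        rw [← integral_indicator hs]
        refine integral_congr_ae (Filter.EventuallyEq.of_eq (funext fun x => ?_))
        rw [norm_indicator_eq_indicator_norm]
      rw [← Real.norm_eq_abs, ← h2]
      exact h1.trans (le_of_eq rfl)
    calc ∫ x in s, ‖(Fm : Eucl n → Eucl n) x‖ ^ 2 ∂μB
        = Λ ((mem1 _ hs2).toLp _) := by rw [happ, hRHS]
      _ ≤ |Λ ((mem1 _ hs2).toLp _)| := le_abs_self _
      _ ≤ ‖Λ‖ * ∫ x in s, ‖(Fm : Eucl n → Eucl n) x‖ ∂μB := hLHS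
  have hae : 0 ≤ᵐ[μB] fun x => ‖Λ‖ * ‖(Fm : Eucl n → Eucl n) x‖
      - ‖(Fm : Eucl n → Eucl n) x‖ ^ 2 := by
    refine ae_nonneg_of_forall_setIntegral_nonneg
      ((hFm_norm_int.const_mul ‖Λ‖).sub hFm_sq_int) (fun s hs _ => ?_)
    rw [integral_sub ((hFm_norm_int.const_mul ‖Λ‖).integrableOn) (hFm_sq_int.integrableOn)]
    have := key s hs
    rw [integral_const_mul]
    linarith
  filter_upwards [hae] with x hx
  simp only [Pi.zero_apply] at hx
  nlinarith [norm_nonneg ((Fm : Eucl n → Eucl n) x), norm_nonneg Λ,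
    sq_nonneg (‖(Fm : Eucl n → Eucl n) x‖ - ‖Λ‖)]


set_option maxHeartbeats 2000000 in
/-- Construction of the representing vector field, via Hahn–Banach and `L²` duality. -/
lemma exists_rep (hT : TestLinear T)
    (hC : ∃ C : ℝ, ∀ φ : Eucl n → ℝ, IsTest Set.univ φ → |T φ| ≤ C * ∫ x, ‖gradient φ x‖) :
    ∃ G : Eucl n → Eucl n, AEStronglyMeasurable G volume ∧
      eLpNorm G ⊤ volume ≤ distNormW11 T ∧
      ∀ φ : Eucl n → ℝ, IsTest Set.univ φ → T φ = ∫ x, (inner ℝ (G x) (gradient φ x) : ℝ) := by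
  classical
  have hwd : ∀ (φ ψ : Eucl n → ℝ), IsTest Set.univ φ → IsTest Set.univ ψ →
      (gradient φ =ᵐ[(volume : Measure (Eucl n))] gradient ψ) → T φ = T ψ :=
    fun φ ψ hφ hψ h => T_eq_of_grad_ae hT hC hφ hψ h
  -- the subspace of gradients in L¹
  let p : Subspace ℝ (Lp (Eucl n) 1 (volume : Measure (Eucl n))) :=
    { carrier := {v | ∃ φ : Eucl n → ℝ, IsTest Set.univ φ ∧
        (⇑v : Eucl n → Eucl n) =ᵐ[(volume : Measure (Eucl n))] gradient φ}
      zero_mem' := by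
        refine ⟨0, isTest_zero, ?_⟩
        filter_upwards [Lp.coeFn_zero (Eucl n) 1 (volume : Measure (Eucl n))] with x hx
        rw [hx]
        exact (gradient_const (𝕜 := ℝ) (c := (0:ℝ)) (x := x)).symm
      add_mem' := by
        rintro v w ⟨φ, hφ, hvφ⟩ ⟨ψ, hψ, hwψ⟩
        refine ⟨(1:ℝ) • φ + (1:ℝ) • ψ, hφ.smul_add hψ 1 1, ?_⟩
        filter_upwards [Lp.coeFn_add v w, hvφ, hwψ] with x h1 h2 h3
        rw [h1, Pi.add_apply, h2, h3, gradient_smul_add hφ hψ 1 1 x]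
        simp
      smul_mem' := by
        rintro c v ⟨φ, hφ, hvφ⟩
        refine ⟨c • φ + (0:ℝ) • (0 : Eucl n → ℝ), hφ.smul_add isTest_zero c 0, ?_⟩
        filter_upwards [Lp.coeFn_smul c v, hvφ] with x h1 h2
        rw [h1, Pi.smul_apply, h2, gradient_smul_add hφ isTest_zero c 0 x]
        simp }
  have pmem : ∀ v : p, ∃ φ : Eucl n → ℝ, IsTest Set.univ φ ∧
      (⇑(v : Lp (Eucl n) 1 (volume : Measure (Eucl n))) : Eucl n → Eucl n)
        =ᵐ[(volume : Measure (Eucl n))] gradient φ := fun v => v.2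
  let Φ : p → (Eucl n → ℝ) := fun v => Classical.choose (pmem v)
  have hΦ1 : ∀ v : p, IsTest Set.univ (Φ v) := fun v => (Classical.choose_spec (pmem v)).1
  have hΦ2 : ∀ v : p, (⇑(v : Lp (Eucl n) 1 (volume : Measure (Eucl n))) : Eucl n → Eucl n)
      =ᵐ[(volume : Measure (Eucl n))] gradient (Φ v) := fun v => (Classical.choose_spec (pmem v)).2
  have key : ∀ (v : p) (φ : Eucl n → ℝ), IsTest Set.univ φ →
      ((⇑(v : Lp (Eucl n) 1 (volume : Measure (Eucl n))) : Eucl n → Eucl n)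
        =ᵐ[(volume : Measure (Eucl n))] gradient φ) → T (Φ v) = T φ :=
    fun v φ hφ h => hwd _ _ (hΦ1 v) hφ ((hΦ2 v).symm.trans h)
  let L0 : p →ₗ[ℝ] ℝ :=
    { toFun := fun v => T (Φ v)
      map_add' := by
        intro v w
        have h1 : (⇑((v + w : p) : Lp (Eucl n) 1 (volume : Measure (Eucl n))))
            =ᵐ[(volume : Measure (Eucl n))] gradient ((1:ℝ) • Φ v + (1:ℝ) • Φ w) := by
          have hadd : ((v + w : p) : Lp (Eucl n) 1 (volume : Measure (Eucl n)))
              = (v : Lp (Eucl n) 1 (volume : Measure (Eucl n)))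
                + (w : Lp (Eucl n) 1 (volume : Measure (Eucl n))) := rfl
          rw [hadd]
          filter_upwards [Lp.coeFn_add (v : Lp (Eucl n) 1 (volume : Measure (Eucl n)))
            (w : Lp (Eucl n) 1 (volume : Measure (Eucl n))), hΦ2 v, hΦ2 w] with x h1 h2 h3
          rw [h1, Pi.add_apply, h2, h3, gradient_smul_add (hΦ1 v) (hΦ1 w) 1 1 x]
          simp
        have h2 : T (Φ (v + w)) = T ((1:ℝ) • Φ v + (1:ℝ) • Φ w) :=
          key _ _ ((hΦ1 v).smul_add (hΦ1 w) 1 1) h1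
        rw [h2, hT (Φ v) (Φ w) (hΦ1 v) (hΦ1 w) 1 1]
        ring
      map_smul' := by
        intro c v
        have h1 : (⇑((c • v : p) : Lp (Eucl n) 1 (volume : Measure (Eucl n))))
            =ᵐ[(volume : Measure (Eucl n))] gradient (c • Φ v + (0:ℝ) • (0 : Eucl n → ℝ)) := by
          have hsm : ((c • v : p) : Lp (Eucl n) 1 (volume : Measure (Eucl n)))
              = c • (v : Lp (Eucl n) 1 (volume : Measure (Eucl n))) := rfl
          rw [hsm]
          filter_upwards [Lp.coeFn_smul c (v : Lp (Eucl n) 1 (volume : Measure (Eucl n))),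
            hΦ2 v] with x h1 h2
          rw [h1, Pi.smul_apply, h2, gradient_smul_add (hΦ1 v) isTest_zero c 0 x]
          simp
        have h2 : T (Φ (c • v)) = T (c • Φ v + (0:ℝ) • (0 : Eucl n → ℝ)) :=
          key _ _ ((hΦ1 v).smul_add isTest_zero c 0) h1
        rw [h2, hT (Φ v) 0 (hΦ1 v) isTest_zero c 0, T_zero hT, RingHom.id_apply,
          smul_eq_mul]
        ring }
  have hbound : ∀ v : p, ‖L0 v‖ ≤ (distNormW11 T).toReal * ‖v‖ := by
    intro v
    have hnv : ‖v‖ = ∫ x, ‖gradient (Φ v) x‖ := by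
      rw [Submodule.coe_norm, Lp.norm_def, eLpNorm_congr_ae (hΦ2 v),
        toReal_eLpNorm_one (hΦ1 v).grad_integrable]
    have h1 : ‖L0 v‖ = |T (Φ v)| := rfl
    rw [h1, hnv]
    exact abs_T_le_distNorm hC (hΦ1 v)
  let L0c : p →L[ℝ] ℝ := L0.mkContinuous _ hbound
  obtain ⟨Λ, hΛext, hΛnorm⟩ := exists_extension_norm_eq p L0c
  have hΛle : ‖Λ‖ ≤ (distNormW11 T).toReal := by
    rw [hΛnorm]
    exact LinearMap.mkContinuous_norm_le _ ENNReal.toReal_nonneg _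
  -- annuli and balls
  let A : ℕ → Set (Eucl n) := fun m => (fun x : Eucl n => ‖x‖) ⁻¹' Set.Ico (m : ℝ) ((m : ℝ) + 1)
  have hA : ∀ m, MeasurableSet (A m) := fun m => measurable_norm measurableSet_Ico
  have hA_mem : ∀ x : Eucl n, x ∈ A (Nat.floor ‖x‖) := fun x =>
    ⟨Nat.floor_le (norm_nonneg x), Nat.lt_floor_add_one _⟩
  have hA_eq : ∀ {x : Eucl n} {m : ℕ}, x ∈ A m → Nat.floor ‖x‖ = m := fun {x m} hx =>
    (Nat.floor_eq_iff (norm_nonneg _)).mpr hx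
  let B' : ℕ → Set (Eucl n) := fun m => Metric.ball (0 : Eucl n) ((m : ℝ) + 1)
  have hAB : ∀ m, A m ⊆ B' m := fun m x hx => mem_ball_zero_iff.mpr hx.2
  have hmain : ∀ m : ℕ, ∃ Fm : Lp (Eucl n) 2 (volume.restrict (B' m)),
      (∀ᵐ x ∂(volume.restrict (B' m)), ‖(Fm : Eucl n → Eucl n) x‖ ≤ ‖Λ‖) ∧
      ∀ (g : Eucl n → Eucl n) (hg2 : MemLp g 2 (volume.restrict (B' m)))
        (hg1 : MemLp ((B' m).indicator g) 1 (volume : Measure (Eucl n))),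
        Λ (hg1.toLp _) = ∫ x, (inner ℝ ((Fm : Eucl n → Eucl n) x) (g x) : ℝ)
          ∂(volume.restrict (B' m)) :=
    fun m => ball_rep Λ measurableSet_ball measure_ball_lt_top.ne
  choose F hFbd hFrep using hmain
  set G : Eucl n → Eucl n := fun x => (F (Nat.floor ‖x‖) : Eucl n → Eucl n) x with hG
  -- strong measurability of the glued function
  have hGsm : StronglyMeasurable G := by
    refine stronglyMeasurable_of_tendsto (f := fun K x =>
      ∑ m ∈ Finset.range K, (A m).indicator (⇑(F m)) x) atTop (fun K => ?_) ?_
    · exact Finset.stronglyMeasurable_fun_sum _ fun m _ =>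
        (Lp.stronglyMeasurable (F m)).indicator (hA m)
    · rw [tendsto_pi_nhds]
      intro x
      have hev : ∀ K, Nat.floor ‖x‖ < K →
          (∑ m ∈ Finset.range K, (A m).indicator (⇑(F m)) x) = G x := by
        intro K hK
        rw [Finset.sum_eq_single_of_mem (Nat.floor ‖x‖) (Finset.mem_range.mpr hK)
          (fun m _ hm => Set.indicator_of_notMem (fun hxm => hm (hA_eq hxm).symm) _)]
        rw [Set.indicator_of_mem (hA_mem x)]
      refine Filter.Tendsto.congr' ?_ (tendsto_const_nhds (x := G x))
      exact Filter.eventually_atTop.mpr ⟨Nat.floor ‖x‖ + 1, fun K hK => (hev K hK).symm⟩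
  -- essential bound
  have hGbd : ∀ᵐ x ∂(volume : Measure (Eucl n)), ‖G x‖ ≤ ‖Λ‖ := by
    have h1 : ∀ m : ℕ, ∀ᵐ x ∂(volume : Measure (Eucl n)), x ∈ B' m →
        ‖(F m : Eucl n → Eucl n) x‖ ≤ ‖Λ‖ :=
      fun m => (ae_restrict_iff' measurableSet_ball).mp (hFbd m)
    filter_upwards [ae_all_iff.mpr h1] with x hx
    exact hx (Nat.floor ‖x‖) (mem_ball_zero_iff.mpr (Nat.lt_floor_add_one _))
  have hGtop : eLpNorm G ⊤ volume ≤ distNormW11 T := by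
    have h1 := eLpNorm_le_of_ae_bound (p := (⊤ : ℝ≥0∞)) hGbd
    simp only [ENNReal.toReal_top, inv_zero, ENNReal.rpow_zero, one_mul] at h1
    calc eLpNorm G ⊤ volume ≤ ENNReal.ofReal ‖Λ‖ := h1
      _ ≤ ENNReal.ofReal (distNormW11 T).toReal := ENNReal.ofReal_le_ofReal hΛle
      _ = distNormW11 T := ENNReal.ofReal_toReal (distNorm_ne_top hC)
  -- representation on test functions
  refine ⟨G, hGsm.aestronglyMeasurable, hGtop, ?_⟩
  intro φ hφ
  obtain ⟨r, hr⟩ := hφ.hcs.isBounded.subset_ball (0 : Eucl n)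
  set K := ⌈r⌉₊ with hK
  have hsupp : ∀ x : Eucl n, (K : ℝ) ≤ ‖x‖ → gradient φ x = 0 := by
    intro x hx
    have hnot : x ∉ tsupport φ := by
      intro hmem
      have h2 := mem_ball_zero_iff.mp (hr hmem)
      have h3 := Nat.le_ceil r
      rw [← hK] at h3
      linarith
    have hfz : fderiv ℝ φ x = 0 :=
      image_eq_zero_of_notMem_tsupport (fun hmem => hnot (tsupport_fderiv_subset ℝ hmem))
    rw [gradient_def, hfz, map_zero]
  obtain ⟨Cg, hCg⟩ := hφ.grad_hcs.exists_bound_of_continuous hφ.grad_continuous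
  -- membership of the annular pieces
  have hg2 : ∀ m : ℕ, MemLp ((A m).indicator (gradient φ)) 2 (volume.restrict (B' m)) := by
    intro m
    haveI : IsFiniteMeasure (volume.restrict (B' m)) :=
      ⟨by rw [Measure.restrict_apply_univ]; exact measure_ball_lt_top⟩
    have haesm : AEStronglyMeasurable ((A m).indicator (gradient φ)) (volume.restrict (B' m)) :=
      (hφ.grad_continuous.stronglyMeasurable.indicator (hA m)).aestronglyMeasurable
    have htop : MemLp ((A m).indicator (gradient φ)) ⊤ (volume.restrict (B' m)) := by
      refine memLp_top_of_bound haesm (max Cg 0) (Filter.Eventually.of_forall fun x => ?_)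
      rw [norm_indicator_eq_indicator_norm]
      by_cases hx : x ∈ A m
      · rw [Set.indicator_of_mem hx]
        exact (hCg x).trans (le_max_left _ _)
      · rw [Set.indicator_of_notMem hx]
        exact le_max_right _ _
    exact htop.mono_exponent le_top
  have hg1' : ∀ m : ℕ, MemLp ((A m).indicator (gradient φ)) 1 (volume : Measure (Eucl n)) :=
    fun m => memLp_one_iff_integrable.mpr
      ((integrable_indicator_iff (hA m)).mpr hφ.grad_integrable.integrableOn)
  have hg1 : ∀ m : ℕ, MemLp ((B' m).indicator ((A m).indicator (gradient φ))) 1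
      (volume : Measure (Eucl n)) := by
    intro m
    rw [Set.indicator_indicator, Set.inter_eq_self_of_subset_right (hAB m)]
    exact hg1' m
  -- each annular piece
  have hApiece : ∀ m : ℕ, Λ ((hg1 m).toLp _)
      = ∫ x in A m, (inner ℝ (G x) (gradient φ x) : ℝ) ∂(volume : Measure (Eucl n)) := by
    intro m
    rw [hFrep m ((A m).indicator (gradient φ)) (hg2 m) (hg1 m)]
    have h1 : ∀ x : Eucl n, (inner ℝ ((F m : Eucl n → Eucl n) x) ((A m).indicator (gradient φ) x) : ℝ)
        = (A m).indicator (fun y => (inner ℝ ((F m : Eucl n → Eucl n) y) (gradient φ y) : ℝ)) x := by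
      intro x
      by_cases hx : x ∈ A m
      · rw [Set.indicator_of_mem hx, Set.indicator_of_mem hx]
      · rw [Set.indicator_of_notMem hx, Set.indicator_of_notMem hx, inner_zero_right]
    rw [integral_congr_ae (Filter.EventuallyEq.of_eq (funext h1)), integral_indicator (hA m)]
    rw [Measure.restrict_restrict (hA m), Set.inter_eq_self_of_subset_left (hAB m)]
    refine setIntegral_congr_fun (hA m) fun x hx => ?_
    have h2 : Nat.floor ‖x‖ = m := hA_eq hx
    rw [hG]
    dsimp only
    rw [h2]
  -- sum of the annular pieces is the full gradient
  have hsum_fun : (∑ m ∈ Finset.range K, (A m).indicator (gradient φ)) = gradient φ := by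
    funext x
    rw [Finset.sum_apply]
    by_cases hx : Nat.floor ‖x‖ < K
    · rw [Finset.sum_eq_single_of_mem (Nat.floor ‖x‖) (Finset.mem_range.mpr hx)
        (fun m _ hm => Set.indicator_of_notMem (fun hxm => hm (hA_eq hxm).symm) _)]
      rw [Set.indicator_of_mem (hA_mem x)]
    · have h0 : gradient φ x = 0 := by
        refine hsupp x ?_
        calc (K : ℝ) ≤ (Nat.floor ‖x‖ : ℝ) := by exact_mod_cast Nat.le_of_not_lt hx
          _ ≤ ‖x‖ := Nat.floor_le (norm_nonneg x)
      rw [h0]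
      refine Finset.sum_eq_zero fun m hm => ?_
      refine Set.indicator_of_notMem (fun hxm => ?_) _
      rw [hA_eq hxm] at hx
      exact hx (Finset.mem_range.mp hm)
  have hmemφ : MemLp (gradient φ) 1 (volume : Measure (Eucl n)) :=
    memLp_one_iff_integrable.mpr hφ.grad_integrable
  -- Λ applied to the full gradient
  have hleft : Λ (hmemφ.toLp _) = T φ := by
    have hmem : hmemφ.toLp (gradient φ) ∈ p := ⟨φ, hφ, hmemφ.coeFn_toLp⟩
    have h1 := hΛext ⟨hmemφ.toLp (gradient φ), hmem⟩
    have h2 : L0c ⟨hmemφ.toLp (gradient φ), hmem⟩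
        = T (Φ ⟨hmemφ.toLp (gradient φ), hmem⟩) := rfl
    have h3 : T (Φ ⟨hmemφ.toLp (gradient φ), hmem⟩) = T φ :=
      key _ _ hφ hmemφ.coeFn_toLp
    rw [h1, h2, h3]
  have hsplit : Λ (hmemφ.toLp _) = ∑ m ∈ Finset.range K, Λ ((hg1 m).toLp _) := by
    have h1 : hmemφ.toLp (gradient φ)
        = (memLp_finset_sum' (Finset.range K) (fun m _ => hg1' m)).toLp
          (∑ m ∈ Finset.range K, (A m).indicator (gradient φ)) :=
      (MemLp.toLp_congr _ _ (Filter.EventuallyEq.of_eq hsum_fun.symm))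
    rw [h1, toLp_finset_sum (Finset.range K) hg1', map_sum]
    refine Finset.sum_congr rfl fun m _ => ?_
    congr 1
    refine MemLp.toLp_congr _ _ (Filter.EventuallyEq.of_eq ?_)
    rw [Set.indicator_indicator, Set.inter_eq_self_of_subset_right (hAB m)]
  -- the integral against G splits the same way
  have hGint : Integrable (fun x => (inner ℝ (G x) (gradient φ x) : ℝ)) volume :=
    inner_grad_integrable' hGsm.aestronglyMeasurable hGbd hφ
  have hisplit : ∫ x, (inner ℝ (G x) (gradient φ x) : ℝ)
      = ∑ m ∈ Finset.range K, ∫ x in A m, (inner ℝ (G x) (gradient φ x) : ℝ)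
        ∂(volume : Measure (Eucl n)) := by
    have h1 : (fun x => (inner ℝ (G x) (gradient φ x) : ℝ))
        = fun x => ∑ m ∈ Finset.range K,
            (A m).indicator (fun y => (inner ℝ (G y) (gradient φ y) : ℝ)) x := by
      funext x
      by_cases hx : Nat.floor ‖x‖ < K
      · rw [Finset.sum_eq_single_of_mem (Nat.floor ‖x‖) (Finset.mem_range.mpr hx)
          (fun m _ hm => Set.indicator_of_notMem (fun hxm => hm (hA_eq hxm).symm) _)]
        rw [Set.indicator_of_mem (hA_mem x)]
      · have h0 : gradient φ x = 0 := by
          refine hsupp x ?_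
          calc (K : ℝ) ≤ (Nat.floor ‖x‖ : ℝ) := by exact_mod_cast Nat.le_of_not_lt hx
            _ ≤ ‖x‖ := Nat.floor_le (norm_nonneg x)
        rw [h0, inner_zero_right]
        refine (Finset.sum_eq_zero fun m hm => ?_).symm
        refine Set.indicator_of_notMem (fun hxm => ?_) _
        rw [hA_eq hxm] at hx
        exact hx (Finset.mem_range.mp hm)
    calc ∫ x, (inner ℝ (G x) (gradient φ x) : ℝ)
        = ∫ x, ∑ m ∈ Finset.range K,
            (A m).indicator (fun y => (inner ℝ (G y) (gradient φ y) : ℝ)) x :=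
          integral_congr_ae (Filter.EventuallyEq.of_eq h1)
      _ = ∑ m ∈ Finset.range K,
            ∫ x, (A m).indicator (fun y => (inner ℝ (G y) (gradient φ y) : ℝ)) x :=
          integral_finset_sum _ (fun m _ => hGint.indicator (hA m))
      _ = ∑ m ∈ Finset.range K, ∫ x in A m, (inner ℝ (G x) (gradient φ x) : ℝ)
            ∂(volume : Measure (Eucl n)) :=
          Finset.sum_congr rfl fun m _ => integral_indicator (hA m)
  rw [← hleft, hsplit, hisplit]
  exact Finset.sum_congr rfl fun m _ => hApiece m


lemma isDivOf_neg_of_rep {G : Eucl n → Eucl n}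
    (hGrep : ∀ φ : Eucl n → ℝ, IsTest Set.univ φ →
      T φ = ∫ x, (inner ℝ (G x) (gradient φ x) : ℝ)) : IsDivOf (-G) T := by
  intro φ hφ
  rw [hGrep φ hφ]
  have h1 : ∀ x : Eucl n, (inner ℝ ((-G) x) (gradient φ x) : ℝ)
      = - (inner ℝ (G x) (gradient φ x) : ℝ) := by
    intro x
    rw [Pi.neg_apply, inner_neg_left]
  rw [integral_congr_ae (Filter.EventuallyEq.of_eq (funext h1)), integral_neg, neg_neg]

end BVPaper

open BVPaper
/-- Characterization of the dual of the homogeneous Sobolev space `Ẇ^{1,1}(ℝⁿ)`: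
`T ∈ Ẇ^{1,1}(ℝⁿ)*` iff `T = div F` for some `F ∈ L^∞`, and the dual norm is the
minimum of `‖F‖_∞` over such `F` (the minimum being attained). -/
theorem statement6 (n : ℕ) (T : (Eucl n → ℝ) → ℝ) (hT : TestLinear T) :
    ((∃ C : ℝ, ∀ φ : Eucl n → ℝ, IsTest Set.univ φ →
        |T φ| ≤ C * ∫ x, ‖gradient φ x‖) ↔
      ∃ F : Eucl n → Eucl n, AEStronglyMeasurable F volume ∧
        eLpNorm F ⊤ volume ≠ ⊤ ∧ IsDivOf F T) ∧
    ((∃ C : ℝ, ∀ φ : Eucl n → ℝ, IsTest Set.univ φ →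
        |T φ| ≤ C * ∫ x, ‖gradient φ x‖) →
      ∃ F : Eucl n → Eucl n, AEStronglyMeasurable F volume ∧ IsDivOf F T ∧
        eLpNorm F ⊤ volume = distNormW11 T ∧
        ∀ F' : Eucl n → Eucl n, AEStronglyMeasurable F' volume → IsDivOf F' T →
          distNormW11 T ≤ eLpNorm F' ⊤ volume) := by
  constructor
  · constructor
    · intro hC
      obtain ⟨G, hGsm, hGtop, hGrep⟩ := exists_rep hT hC
      refine ⟨-G, hGsm.neg, ?_, isDivOf_neg_of_rep hGrep⟩
      rw [eLpNorm_neg]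
      exact ne_top_of_le_ne_top (distNorm_ne_top hC) hGtop
    · rintro ⟨F, hF, hFtop, hdiv⟩
      exact ⟨(eLpNorm F ⊤ volume).toReal, fun φ hφ => abs_T_le_of_isDivOf hF hFtop hdiv hφ⟩
  · intro hC
    obtain ⟨G, hGsm, hGtop, hGrep⟩ := exists_rep hT hC
    have hdiv : IsDivOf (-G) T := isDivOf_neg_of_rep hGrep
    refine ⟨-G, hGsm.neg, hdiv, ?_, fun F' hF' hdiv' => distNorm_le_eLpNorm hF' hdiv'⟩
    rw [eLpNorm_neg]
    refine le_antisymm hGtop ?_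
    have h1 := distNorm_le_eLpNorm hGsm.neg hdiv
    rwa [eLpNorm_neg] at h1
end
end

section
/- Let Ω ⊆ ℝⁿ be open and μ a locally finite signed Radon measure on Ω such that |μ(U)| ≤ C·H^{n-1}(∂U) for every smooth bounded open set U compactly contained in Ω. Then for every compact set A ⊆ Ω with H^{n-1}(A) = 0, one has μ(A) = 0. -/
open MeasureTheory Topology Filter Set Metric
open scoped ENNReal NNReal RealInnerProductSpace

noncomputable section

open BVPaper

namespace SBAux


lemma null_of_small {c : ℝ≥0∞} (hc : c ≠ ⊤) {X : ℝ≥0∞} {δ : ℝ} (hδ : 0 < δ)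
    (h : ∀ ε : ℝ, 0 < ε → ε ≤ δ → X ≤ c * ENNReal.ofReal ε) : X = 0 := by
  have hs : Tendsto (fun k : ℕ => c * ENNReal.ofReal (1 / (k + 1))) atTop (𝓝 0) := by
    have h1 : Tendsto (fun k : ℕ => ENNReal.ofReal (1 / (k + 1))) atTop (𝓝 0) := by
      rw [show (0:ℝ≥0∞) = ENNReal.ofReal 0 by simp]
      exact (ENNReal.continuous_ofReal.tendsto 0).comp tendsto_one_div_add_atTop_nhds_zero_nat
    simpa using ENNReal.Tendsto.const_mul h1 (Or.inr hc)
  have hev : ∀ᶠ k : ℕ in atTop, X ≤ c * ENNReal.ofReal (1 / (k + 1)) := by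
    obtain ⟨K, hK⟩ := exists_nat_one_div_lt hδ
    filter_upwards [eventually_ge_atTop K] with k hk
    refine h _ (by positivity) ?_
    calc (1 : ℝ) / (k + 1) ≤ 1 / (K + 1) := by
          apply one_div_le_one_div_of_le
          · positivity
          · linarith [(Nat.cast_le.mpr hk : (K:ℝ) ≤ k)]
      _ ≤ δ := hK.le
  exact le_antisymm (ge_of_tendsto hs hev : X ≤ 0) zero_le

lemma measure_compact_ne_top {X : Type*} [MetricSpace X] [MeasurableSpace X]
    (ρ : Measure X) {Ω K : Set X} (hloc : ∀ x ∈ Ω, ∃ s ∈ 𝓝 x, ρ s ≠ ⊤)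
    (hK : IsCompact K) (hKΩ : K ⊆ Ω) : ρ K ≠ ⊤ := by
  classical
  have hU : ∀ x ∈ K, (if h : x ∈ Ω then (hloc x h).choose else univ) ∈ 𝓝 x := by
    intro x hx
    rw [dif_pos (hKΩ hx)]
    exact (hloc x (hKΩ hx)).choose_spec.1
  obtain ⟨t, htK, hcov⟩ := hK.elim_nhds_subcover _ hU
  have hle : ρ K ≤ ∑ x ∈ t, ρ (if h : x ∈ Ω then (hloc x h).choose else univ) :=
    (measure_mono hcov).trans (measure_biUnion_finset_le t _)
  refine ne_top_of_le_ne_top ?_ hle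
  refine (ENNReal.sum_lt_top.mpr fun x hx => ?_).ne
  rw [dif_pos (hKΩ (htK x hx))]
  exact ((hloc x (hKΩ (htK x hx))).choose_spec.2).lt_top

lemma ball_meas_le {X : Type*} [MetricSpace X] [MeasurableSpace X]
    (Q σ : Measure X) {x : X} {δ : ℝ} {c : ℝ≥0∞}
    (h : ∀ r, 0 < r → r < δ → Q (closedBall x r) ≤ c * σ (closedBall x r))
    {ρ : ℝ} (hρ : 0 < ρ) (hρδ : ρ ≤ δ) : Q (ball x ρ) ≤ c * σ (ball x ρ) := by
  set u : ℕ → Set X := fun k => closedBall x ((1 - 1/(k+2)) * ρ) with hudef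
  have hfrac : ∀ k : ℕ, (0:ℝ) < 1 - 1/(k+2) := by
    intro k
    have h1 : (1:ℝ)/(k+2) < 1 := by
      rw [div_lt_one (by positivity)]
      linarith [Nat.cast_nonneg (α := ℝ) k]
    linarith
  have hfrac1 : ∀ k : ℕ, (1:ℝ) - 1/(k+2) < 1 := by
    intro k
    have : (0:ℝ) < 1/(k+2) := by positivity
    linarith
  have hmono : Monotone u := by
    intro a b hab
    apply closedBall_subset_closedBall
    have : (1:ℝ)/(b+2) ≤ 1/(a+2) := by
      apply one_div_le_one_div_of_le (by positivity)
      linarith [(Nat.cast_le.mpr hab : (a:ℝ) ≤ b)]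
    nlinarith
  have hUn : (⋃ k, u k) = ball x ρ := by
    apply Subset.antisymm
    · refine iUnion_subset fun k => ?_
      intro y hy
      rw [mem_closedBall] at hy
      rw [mem_ball]
      calc dist y x ≤ (1 - 1/(k+2)) * ρ := hy
        _ < 1 * ρ := mul_lt_mul_of_pos_right (hfrac1 k) hρ
        _ = ρ := one_mul ρ
    · intro y hy
      rw [mem_ball] at hy
      have hgap : 0 < (ρ - dist y x)/ρ := div_pos (by linarith) hρ
      obtain ⟨k, hk⟩ := exists_nat_one_div_lt hgap
      refine mem_iUnion.2 ⟨k, ?_⟩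
      rw [hudef]
      simp only [mem_closedBall]
      have h1 : (1:ℝ)/(k+2) ≤ 1/(k+1) := by
        apply one_div_le_one_div_of_le (by positivity)
        linarith
      have h2 : (1:ℝ)/(k+1) < (ρ - dist y x)/ρ := by
        have hcast : ((k:ℝ)+1) = (k+1 : ℝ) := by push_cast; ring
        simpa [hcast] using hk
      have h3 : (1:ℝ)/(k+2) * ρ < ρ - dist y x := by
        have hlt := lt_of_le_of_lt h1 h2
        calc (1:ℝ)/(k+2) * ρ < (ρ - dist y x)/ρ * ρ := mul_lt_mul_of_pos_right hlt hρ
          _ = ρ - dist y x := by field_simp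
      nlinarith
  have htQ : Tendsto (Q ∘ u) atTop (𝓝 (Q (ball x ρ))) := by
    have := tendsto_measure_iUnion_atTop (μ := Q) hmono
    rwa [hUn] at this
  refine le_of_tendsto htQ (Eventually.of_forall fun k => ?_)
  have hrk : 0 < (1 - 1/(k+2)) * ρ := mul_pos (hfrac k) hρ
  have hrk2 : (1 - 1/(k+2)) * ρ < δ := by
    calc (1 - 1/(k+2)) * ρ < 1 * ρ := mul_lt_mul_of_pos_right (hfrac1 k) hρ
      _ = ρ := one_mul ρ
      _ ≤ δ := hρδ
  calc Q (u k) ≤ c * σ (u k) := h _ hrk hrk2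
    _ ≤ c * σ (ball x ρ) := by
        apply mul_le_mul_right
        apply measure_mono
        intro y hy
        rw [mem_closedBall] at hy
        rw [mem_ball]
        calc dist y x ≤ (1 - 1/(k+2)) * ρ := hy
          _ < 1 * ρ := mul_lt_mul_of_pos_right (hfrac1 k) hρ
          _ = ρ := one_mul ρ

lemma coord_le_norm {m : ℕ} (x : Eucl m) (i : Fin m) : |x i| ≤ ‖x‖ := by
  rw [EuclideanSpace.norm_eq]
  have h1 : |x i| = Real.sqrt (‖x i‖ ^ 2) := by
    rw [Real.sqrt_sq_eq_abs]; simp [Real.norm_eq_abs, abs_abs]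
  rw [h1]
  apply Real.sqrt_le_sqrt
  exact Finset.single_le_sum (f := fun j => ‖x j‖ ^ 2) (fun j _ => by positivity) (Finset.mem_univ i)

lemma face_meas (m : ℕ) (i : Fin (m+1)) (c : ℝ) :
    μH[(m:ℝ)] {x : Eucl (m+1) | x i = c ∧ ∀ j, |x j| ≤ 1} < ⊤ := by
  classical
  set cube : Set (Fin m → ℝ) := Set.pi univ fun _ => Icc (-1:ℝ) 1 with hcubedef
  have hcube : μH[(m:ℝ)] cube < ⊤ := by
    have h : (μH[(m:ℝ)] : Measure (Fin m → ℝ)) = volume := by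
      simpa [Fintype.card_fin] using (hausdorffMeasure_pi_real (ι := Fin m))
    rw [h]
    exact (isCompact_univ_pi fun _ => isCompact_Icc).measure_lt_top
  set ι1 : (Fin m → ℝ) → (Fin (m+1) → ℝ) := fun u => i.insertNth c u with hι1def
  set κ : (Fin (m+1) → ℝ) → Eucl (m+1) := fun v => WithLp.toLp 2 v with hκdef
  have hι1 : LipschitzWith 1 ι1 := by
    apply LipschitzWith.of_dist_le_mul
    intro u v
    rw [NNReal.coe_one, one_mul]
    refine (dist_pi_le_iff dist_nonneg).2 fun b => ?_
    refine Fin.succAboveCases i ?_ (fun j => ?_) b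
    · simpa [hι1def, Fin.insertNth_apply_same] using dist_nonneg
    · simp only [hι1def, Fin.insertNth_apply_succAbove]
      exact dist_le_pi_dist u v j
  have hκ : LipschitzWith (Real.toNNReal (Real.sqrt (m+1))) κ := by
    apply LipschitzWith.of_dist_le_mul
    intro u v
    have hc : ((Real.toNNReal (Real.sqrt (m+1))) : ℝ) = Real.sqrt (m+1) :=
      Real.coe_toNNReal _ (Real.sqrt_nonneg _)
    rw [hc]
    have hd : dist (κ u) (κ v) = Real.sqrt (∑ j, dist (u j) (v j) ^ 2) := by
      exact EuclideanSpace.dist_eq _ _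
    rw [hd]
    have hb : ∑ j, dist (u j) (v j) ^ 2 ≤ (m+1) * dist u v ^ 2 := by
      calc ∑ j, dist (u j) (v j) ^ 2 ≤ ∑ _j : Fin (m+1), dist u v ^ 2 :=
            Finset.sum_le_sum fun j _ => pow_le_pow_left₀ dist_nonneg (dist_le_pi_dist u v j) 2
        _ = (m+1) * dist u v ^ 2 := by simp [mul_comm]
    calc Real.sqrt (∑ j, dist (u j) (v j) ^ 2) ≤ Real.sqrt ((m+1) * dist u v ^ 2) :=
          Real.sqrt_le_sqrt hb
      _ = Real.sqrt (m+1) * dist u v := by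
          rw [Real.sqrt_mul (by positivity), Real.sqrt_sq dist_nonneg]
  have hsub : {x : Eucl (m+1) | x i = c ∧ ∀ j, |x j| ≤ 1} ⊆ (κ ∘ ι1) '' cube := by
    rintro x ⟨hxi, hxb⟩
    refine ⟨i.removeNth x, fun j _ => ?_, ?_⟩
    · exact abs_le.1 (hxb _)
    · show WithLp.toLp 2 (i.insertNth c (i.removeNth x.ofLp)) = x
      rw [← hxi, Fin.insertNth_self_removeNth, WithLp.toLp_ofLp]
  calc μH[(m:ℝ)] {x : Eucl (m+1) | x i = c ∧ ∀ j, |x j| ≤ 1} ≤ μH[(m:ℝ)] ((κ ∘ ι1) '' cube) :=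
        measure_mono hsub
    _ ≤ ((Real.toNNReal (Real.sqrt (m+1)) * 1 : ℝ≥0) : ℝ≥0∞) ^ (m:ℝ) * μH[(m:ℝ)] cube :=
        (hκ.comp hι1).hausdorffMeasure_image_le (Nat.cast_nonneg m) cube
    _ < ⊤ := ENNReal.mul_lt_top
        (ENNReal.rpow_lt_top_of_nonneg (Nat.cast_nonneg m) ENNReal.coe_ne_top) hcube

lemma sphere_meas (m : ℕ) : μH[(m:ℝ)] (Metric.sphere (0 : Eucl (m+1)) 1) < ⊤ := by
  classical
  set T : Set (Eucl (m+1)) := {x | (∀ j, |x j| ≤ 1) ∧ ∃ i, |x i| = 1} with hTdef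
  have hT : μH[(m:ℝ)] T < ⊤ := by
    have hsub : T ⊆ ⋃ i : Fin (m+1),
        ({x : Eucl (m+1) | x i = 1 ∧ ∀ j, |x j| ≤ 1} ∪
         {x : Eucl (m+1) | x i = -1 ∧ ∀ j, |x j| ≤ 1}) := by
      rintro x ⟨hb, i, hi⟩
      rcases abs_eq (by norm_num : (0:ℝ) ≤ 1) |>.1 hi with h | h
      · exact mem_iUnion.2 ⟨i, Or.inl ⟨h, hb⟩⟩
      · exact mem_iUnion.2 ⟨i, Or.inr ⟨h, hb⟩⟩
    refine lt_of_le_of_lt ((measure_mono hsub).trans (measure_iUnion_le _)) ?_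
    rw [tsum_fintype]
    refine ENNReal.sum_lt_top.mpr fun i _ => ?_
    exact lt_of_le_of_lt (measure_union_le _ _)
      (ENNReal.add_lt_top.mpr ⟨face_meas m i 1, face_meas m i (-1)⟩)
  set Φ : Eucl (m+1) → Eucl (m+1) := fun x => ‖x‖⁻¹ • x with hΦdef
  have hΦ : LipschitzOnWith 2 Φ {x : Eucl (m+1) | 1 ≤ ‖x‖} := by
    apply LipschitzOnWith.of_dist_le_mul
    intro x hx y hy
    simp only [mem_setOf_eq] at hx hy
    have hxpos : (0:ℝ) < ‖x‖ := lt_of_lt_of_le one_pos hx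
    have hypos : (0:ℝ) < ‖y‖ := lt_of_lt_of_le one_pos hy
    have h1 : Φ x - Φ y = ‖x‖⁻¹ • (x - y) + (‖x‖⁻¹ - ‖y‖⁻¹) • y := by
      simp only [hΦdef, smul_sub, sub_smul]
      abel
    have h2 : |‖x‖⁻¹ - ‖y‖⁻¹| * ‖y‖ ≤ ‖x‖⁻¹ * ‖x - y‖ := by
      have habs : |‖x‖⁻¹ - ‖y‖⁻¹| = |‖y‖ - ‖x‖| / (‖x‖ * ‖y‖) := by
        have h3 : ‖x‖⁻¹ - ‖y‖⁻¹ = (‖y‖ - ‖x‖) / (‖x‖ * ‖y‖) := by field_simp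
        rw [h3, abs_div, abs_of_pos (mul_pos hxpos hypos)]
      have hn : |‖y‖ - ‖x‖| ≤ ‖x - y‖ := by
        rw [abs_sub_comm]; exact abs_norm_sub_norm_le x y
      rw [habs, div_mul_eq_mul_div, div_le_iff₀ (mul_pos hxpos hypos)]
      calc |‖y‖ - ‖x‖| * ‖y‖ ≤ ‖x - y‖ * ‖y‖ :=
            mul_le_mul_of_nonneg_right hn (norm_nonneg y)
        _ = ‖x‖⁻¹ * ‖x - y‖ * (‖x‖ * ‖y‖) := by field_simp
    calc dist (Φ x) (Φ y) = ‖Φ x - Φ y‖ := dist_eq_norm _ _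
      _ ≤ ‖‖x‖⁻¹ • (x - y)‖ + ‖(‖x‖⁻¹ - ‖y‖⁻¹) • y‖ := by rw [h1]; exact norm_add_le _ _
      _ = ‖x‖⁻¹ * ‖x - y‖ + |‖x‖⁻¹ - ‖y‖⁻¹| * ‖y‖ := by
          rw [norm_smul, norm_smul, Real.norm_eq_abs, Real.norm_eq_abs,
            abs_of_pos (by positivity : (0:ℝ) < ‖x‖⁻¹)]
      _ ≤ ‖x‖⁻¹ * ‖x - y‖ + ‖x‖⁻¹ * ‖x - y‖ := by linarith
      _ = 2 * (‖x‖⁻¹ * ‖x - y‖) := by ring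
      _ ≤ 2 * (1 * ‖x - y‖) := by
          have hle1 : ‖x‖⁻¹ ≤ 1 := by
            rw [inv_le_one_iff₀]; right; exact hx
          gcongr
      _ = (2:ℝ≥0) * dist x y := by rw [one_mul, dist_eq_norm]; norm_num
  have hTW : T ⊆ {x : Eucl (m+1) | 1 ≤ ‖x‖} := by
    rintro x ⟨hb, i, hi⟩
    exact le_trans (le_of_eq hi.symm) (coord_le_norm x i)
  have hsub2 : Metric.sphere (0 : Eucl (m+1)) 1 ⊆ Φ '' T := by
    intro y hy
    have hny : ‖y‖ = 1 := by simpa using hy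
    obtain ⟨i, _, hmax⟩ := Finset.exists_max_image Finset.univ (fun j => |y j|)
      ⟨⟨0, Nat.succ_pos m⟩, Finset.mem_univ _⟩
    have hM : 0 < |y i| := by
      by_contra hM0
      push_neg at hM0
      have hz : y = 0 := by ext j; exact abs_nonpos_iff.1 ((hmax j (Finset.mem_univ j)).trans hM0)
      rw [hz] at hny; simp at hny
    refine ⟨|y i|⁻¹ • y, ⟨fun j => ?_, ⟨i, ?_⟩⟩, ?_⟩
    · show |(|y i|⁻¹ • y) j| ≤ 1
      have he : (|y i|⁻¹ • y) j = |y i|⁻¹ * y j := rfl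
      rw [he, abs_mul, abs_of_pos (by positivity), ← le_div_iff₀' (by positivity)]
      simpa [div_eq_mul_inv] using hmax j (Finset.mem_univ j)
    · show |(|y i|⁻¹ • y) i| = 1
      have he : (|y i|⁻¹ • y) i = |y i|⁻¹ * y i := rfl
      rw [he, abs_mul, abs_of_pos (by positivity)]
      rw [inv_mul_cancel₀ hM.ne']
    · show ‖|y i|⁻¹ • y‖⁻¹ • |y i|⁻¹ • y = y
      rw [norm_smul, Real.norm_eq_abs, abs_of_pos (by positivity), hny, mul_one,
        inv_inv, smul_smul, mul_inv_cancel₀ hM.ne', one_smul]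
  calc μH[(m:ℝ)] (Metric.sphere (0 : Eucl (m+1)) 1) ≤ μH[(m:ℝ)] (Φ '' T) := measure_mono hsub2
    _ ≤ ((2:ℝ≥0) : ℝ≥0∞) ^ (m:ℝ) * μH[(m:ℝ)] T :=
        (hΦ.mono hTW).hausdorffMeasure_image_le (Nat.cast_nonneg m)
    _ < ⊤ := ENNReal.mul_lt_top
        (ENNReal.rpow_lt_top_of_nonneg (Nat.cast_nonneg m) ENNReal.coe_ne_top) hT

lemma sphere_scaled (m : ℕ) (x : Eucl (m+1)) {r : ℝ} (hr : 0 < r) :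
    μH[(m:ℝ)] (Metric.sphere x r) ≤
      ENNReal.ofReal r ^ (m:ℝ) * μH[(m:ℝ)] (Metric.sphere (0 : Eucl (m+1)) 1) := by
  have himg : Metric.sphere x r = (fun y : Eucl (m+1) => x + r • y) '' Metric.sphere 0 1 := by
    ext z
    constructor
    · intro hz
      have hz' : ‖z - x‖ = r := by rwa [mem_sphere, dist_eq_norm] at hz
      refine ⟨r⁻¹ • (z - x), ?_, ?_⟩
      · rw [mem_sphere, dist_zero_right, norm_smul, Real.norm_eq_abs,
          abs_of_pos (by positivity), hz', inv_mul_cancel₀ hr.ne']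
      · show x + r • r⁻¹ • (z - x) = z
        rw [smul_smul, mul_inv_cancel₀ hr.ne', one_smul, add_sub_cancel]
    · rintro ⟨y, hy, rfl⟩
      have hy' : ‖y‖ = 1 := by rwa [mem_sphere, dist_zero_right] at hy
      rw [mem_sphere, dist_eq_norm, add_sub_cancel_left, norm_smul, Real.norm_eq_abs,
        abs_of_pos hr, hy', mul_one]
  have hlip : LipschitzWith (Real.toNNReal r) (fun y : Eucl (m+1) => x + r • y) := by
    apply LipschitzWith.of_dist_le_mul
    intro a b
    rw [Real.coe_toNNReal _ hr.le, dist_eq_norm]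
    have he : x + r • a - (x + r • b) = r • (a - b) := by rw [smul_sub]; abel
    rw [he, norm_smul, Real.norm_eq_abs, abs_of_pos hr, dist_eq_norm]
  rw [himg]
  have := hlip.hausdorffMeasure_image_le (Nat.cast_nonneg m) (Metric.sphere (0:Eucl (m+1)) 1)
  simpa [ENNReal.ofReal] using this





lemma key_ball (m : ℕ) (Q R : Measure (Eucl (m+1))) [IsFiniteMeasure Q] [IsFiniteMeasure R]
    {x : Eucl (m+1)} {δ₁ : ℝ} (Cb : ℝ≥0∞)
    (hsmB : ∀ ρ : ℝ, 0 < ρ → ρ < δ₁ →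
      ENNReal.ofReal |(Q (ball x ρ)).toReal - (R (ball x ρ)).toReal| ≤
        Cb * ENNReal.ofReal ρ ^ (m:ℝ))
    (hQ : ∀ r, 0 < r → r < δ₁ → Q (closedBall x r) ≤ 4⁻¹ * ((Q + R) (closedBall x r))) :
    ∀ ρ : ℝ, 0 < ρ → ρ < δ₁ → (Q + R) (ball x ρ) ≤ 2 * Cb * ENNReal.ofReal ρ ^ (m:ℝ) := by
  intro ρ hρ hρδ
  have hQball : Q (ball x ρ) ≤ 4⁻¹ * ((Q + R) (ball x ρ)) :=
    ball_meas_le Q (Q + R) hQ hρ hρδ.le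
  have hfinQ : Q (ball x ρ) ≠ ⊤ := measure_ne_top _ _
  have hfinR : R (ball x ρ) ≠ ⊤ := measure_ne_top _ _
  have hfinS : (Q + R) (ball x ρ) ≠ ⊤ := measure_ne_top _ _
  set qb := (Q (ball x ρ)).toReal with hqb
  set rb := (R (ball x ρ)).toReal with hrb
  set sb := ((Q + R) (ball x ρ)).toReal with hsb
  have hsplit : sb = qb + rb := by
    rw [hsb, Measure.add_apply, ENNReal.toReal_add hfinQ hfinR]
  have hqle : qb ≤ 4⁻¹ * sb := by
    have := ENNReal.toReal_mono (by
        refine ENNReal.mul_ne_top (by norm_num) hfinS) hQball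
    rwa [ENNReal.toReal_mul, show ((4:ℝ≥0∞)⁻¹).toReal = 4⁻¹ by
      rw [ENNReal.toReal_inv]; norm_num] at this
  have habs : sb / 2 ≤ |qb - rb| := by
    have h1 : rb - qb ≥ sb / 2 := by
      have hq0 : 0 ≤ qb := ENNReal.toReal_nonneg
      have hr0 : 0 ≤ rb := ENNReal.toReal_nonneg
      linarith
    calc sb / 2 ≤ rb - qb := h1
      _ ≤ |qb - rb| := by rw [abs_sub_comm]; exact le_abs_self _
  have hsb0 : 0 ≤ sb := ENNReal.toReal_nonneg
  calc (Q + R) (ball x ρ) = ENNReal.ofReal sb := (ENNReal.ofReal_toReal hfinS).symm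
    _ ≤ ENNReal.ofReal (2 * |qb - rb|) := by
        apply ENNReal.ofReal_le_ofReal; linarith
    _ = 2 * ENNReal.ofReal |qb - rb| := by
        rw [ENNReal.ofReal_mul (by norm_num)]; norm_num
    _ ≤ 2 * (Cb * ENNReal.ofReal ρ ^ (m:ℝ)) := by
        exact mul_le_mul_right (hsmB ρ hρ hρδ) 2
    _ = 2 * Cb * ENNReal.ofReal ρ ^ (m:ℝ) := by ring

lemma cover_term (m k : ℕ) (σ : Measure (Eucl (m+1))) (Cb' : ℝ≥0∞) (hCb' : Cb' ≠ ⊤)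
    (Am : Set (Eucl (m+1)))
    (hAm : ∀ x ∈ Am, ∀ ρ : ℝ, 0 < ρ → ρ ≤ 1/(k+1) →
      σ (closedBall x ρ) ≤ Cb' * ENNReal.ofReal ρ ^ (m:ℝ))
    (t : Set (Eucl (m+1))) (hdiam : EMetric.diam t ≤ ENNReal.ofReal (1/(k+1))) :
    σ (Am ∩ t) ≤ Cb' * ⨆ _ : t.Nonempty, EMetric.diam t ^ (m:ℝ) := by
  rcases (Am ∩ t).eq_empty_or_nonempty with he | ⟨x0, hx0A, hx0t⟩
  · simp [he]
  have htne : t.Nonempty := ⟨x0, hx0t⟩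
  rw [iSup_pos htne]
  have hk1 : (0:ℝ) < 1/(k+1) := by positivity
  have hdne : EMetric.diam t ≠ ⊤ :=
    (lt_of_le_of_lt hdiam ENNReal.ofReal_lt_top).ne
  rcases eq_or_ne (EMetric.diam t) 0 with hd0 | hdpos
  · rcases Nat.eq_zero_or_pos m with hm0 | hmpos
    · subst hm0
      rw [hd0]
      have h1 : σ (Am ∩ t) ≤ Cb' * ENNReal.ofReal (1/(k+1)) ^ ((0:ℕ):ℝ) := by
        refine le_trans (measure_mono ?_) (hAm x0 hx0A (1/(k+1)) hk1 le_rfl)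
        intro y ⟨_, hyt⟩
        have : edist y x0 = 0 := le_antisymm
          (le_trans (EMetric.edist_le_diam_of_mem hyt hx0t) hd0.le) zero_le
        have hyx : y = x0 := by
          rwa [edist_eq_zero] at this
        rw [hyx]
        exact mem_closedBall_self hk1.le
      simpa [ENNReal.rpow_natCast] using h1
    · have hm1 : (1:ℝ) ≤ (m:ℝ) := by exact_mod_cast hmpos
      have hz : σ (Am ∩ t) = 0 := by
        apply null_of_small hCb' (lt_min one_pos hk1)
        intro ε hε hεle
        have hε1 : ε ≤ 1 := hεle.trans (min_le_left _ _)
        have hεk : ε ≤ 1/(k+1) := hεle.trans (min_le_right _ _)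
        have hsubs : Am ∩ t ⊆ closedBall x0 ε := by
          intro y ⟨_, hyt⟩
          have : edist y x0 = 0 := le_antisymm
            (le_trans (EMetric.edist_le_diam_of_mem hyt hx0t) hd0.le) zero_le
          have hyx : y = x0 := by rwa [edist_eq_zero] at this
          rw [hyx]; exact mem_closedBall_self hε.le
        calc σ (Am ∩ t) ≤ σ (closedBall x0 ε) := measure_mono hsubs
          _ ≤ Cb' * ENNReal.ofReal ε ^ (m:ℝ) := hAm x0 hx0A ε hε hεk
          _ ≤ Cb' * ENNReal.ofReal ε := by
              apply mul_le_mul_right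
              exact ENNReal.rpow_le_self_of_le_one (by
                rw [show (1:ℝ≥0∞) = ENNReal.ofReal 1 by simp]
                exact ENNReal.ofReal_le_ofReal hε1) hm1
        
      rw [hz]
      exact zero_le
  · set d := (EMetric.diam t).toReal with hddef
    have hdpos' : 0 < d := ENNReal.toReal_pos hdpos hdne
    have hdle : d ≤ 1/(k+1) := ENNReal.toReal_le_of_le_ofReal hk1.le hdiam
    have hsubs : Am ∩ t ⊆ closedBall x0 d := by
      intro y ⟨_, hyt⟩
      rw [mem_closedBall, dist_edist]
      exact ENNReal.toReal_mono hdne (EMetric.edist_le_diam_of_mem hyt hx0t)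
    calc σ (Am ∩ t) ≤ σ (closedBall x0 d) := measure_mono hsubs
      _ ≤ Cb' * ENNReal.ofReal d ^ (m:ℝ) := hAm x0 hx0A d hdpos' hdle
      _ = Cb' * EMetric.diam t ^ (m:ℝ) := by rw [hddef, ENNReal.ofReal_toReal hdne]


lemma smooth_ball {n : ℕ} (x : Eucl n) {r : ℝ} (hr : 0 < r) :
    BVPaper.SmoothBoundedOpen (Metric.ball x r) := by
  refine ⟨isOpen_ball, isBounded_ball, ?_⟩
  intro z hz
  have hz' : ‖z - x‖ = r := by
    rw [frontier_ball x hr.ne'] at hz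
    rwa [mem_sphere, dist_eq_norm] at hz
  refine ⟨fun y => (inner ℝ (y - x) (y - x) : ℝ) - r ^ 2, ?_, ?_, ?_, 1, one_pos, ?_⟩
  · exact ((contDiff_id.sub contDiff_const).inner ℝ (contDiff_id.sub contDiff_const)).sub
      contDiff_const
  · show (inner ℝ (z - x) (z - x) : ℝ) - r ^ 2 = 0
    rw [real_inner_self_eq_norm_sq, hz']; ring
  · have h1 : HasFDerivAt (fun y : Eucl n => y - x) (ContinuousLinearMap.id ℝ (Eucl n)) z :=
      (hasFDerivAt_id z).sub_const x
    have hd : HasFDerivAt (fun y : Eucl n => (inner ℝ (y - x) (y - x) : ℝ) - r ^ 2)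
        ((fderivInnerCLM ℝ ((z - x), (z - x))).comp
          ((ContinuousLinearMap.id ℝ (Eucl n)).prod (ContinuousLinearMap.id ℝ (Eucl n)))) z :=
      (h1.inner ℝ h1).sub_const (r ^ 2)
    rw [hd.fderiv]
    intro hcontra
    have hcf := congrFun (congrArg (fun f : Eucl n →L[ℝ] ℝ => (f : Eucl n → ℝ)) hcontra) (z - x)
    simp only [ContinuousLinearMap.coe_comp', Function.comp_apply,
      ContinuousLinearMap.zero_apply] at hcf
    rw [show ((ContinuousLinearMap.id ℝ (Eucl n)).prod (ContinuousLinearMap.id ℝ (Eucl n))) (z - x)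
        = ((z - x), (z - x)) from rfl] at hcf
    have hval : (fderivInnerCLM ℝ ((z - x), (z - x))) ((z - x), (z - x))
        = 2 * (inner ℝ (z - x) (z - x) : ℝ) := by
      simp [fderivInnerCLM_apply, real_inner_comm]; ring
    rw [hval, real_inner_self_eq_norm_sq, hz'] at hcf
    nlinarith
  · intro y _
    show y ∈ ball x r ↔ (inner ℝ (y - x) (y - x) : ℝ) - r ^ 2 < 0
    rw [mem_ball, dist_eq_norm, real_inner_self_eq_norm_sq, sub_neg]
    constructor
    · intro h; nlinarith [norm_nonneg (y - x)]
    · intro h; nlinarith [norm_nonneg (y - x)]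

end SBAux

open SBAux


/-- If `|μ(U)| ≤ C·H^{n-1}(∂U)` for all smooth `U ⊂⊂ Ω`, then `μ` vanishes on
compact sets of vanishing `H^{n-1}` measure. -/
theorem statement7 (n : ℕ) (Ω : Set (Eucl n)) (hΩ : IsOpen Ω)
    (μp μn : Measure (Eucl n)) (hsing : μp.MutuallySingular μn)
    (hlfp : LocFinOn Ω μp) (hlfn : LocFinOn Ω μn) (C : ℝ)
    (hsm : ∀ U : Set (Eucl n), SmoothBoundedOpen U → closure U ⊆ Ω →
      ENNReal.ofReal |measVal μp μn U| ≤
        ENNReal.ofReal C * μH[((n : ℝ) - 1)] (frontier U))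
    (A : Set (Eucl n)) (hA : IsCompact A) (hAΩ : A ⊆ Ω)
    (hH : μH[((n : ℝ) - 1)] A = 0) :
    μp A = μn A := by
  classical
  rcases Nat.eq_zero_or_pos n with hn0 | hnpos
  · subst hn0
    have hsub : ∀ x y : Eucl 0, x = y := fun x y => by ext i; exact i.elim0
    rcases A.eq_empty_or_nonempty with rfl | ⟨a, ha⟩
    · simp
    · have hAuniv : A = univ := eq_univ_of_forall fun z => (hsub z a) ▸ ha
      have hΩuniv : Ω = univ := eq_univ_of_forall fun z => (hsub z a) ▸ (hAΩ ha)
      have hUsm : SmoothBoundedOpen (univ : Set (Eucl 0)) := by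
        refine ⟨isOpen_univ, Set.Finite.isBounded (Set.toFinite _), ?_⟩
        intro x hx
        rw [frontier_univ] at hx
        exact absurd hx (notMem_empty x)
      have hval := hsm univ hUsm (by rw [closure_univ, hΩuniv])
      rw [frontier_univ, measure_empty, mul_zero] at hval
      have hmv : |measVal μp μn univ| = 0 := by
        have h0 : ENNReal.ofReal |measVal μp μn univ| = 0 := le_antisymm hval zero_le
        have h1 : |measVal μp μn univ| ≤ 0 := ENNReal.ofReal_eq_zero.1 h0
        exact le_antisymm h1 (abs_nonneg _)
      obtain ⟨s, hs, hstop⟩ := hlfp.2 a (hAΩ ha)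
      have hsuniv : s = univ := eq_univ_of_forall fun z => (hsub z a) ▸ mem_of_mem_nhds hs
      have hptop : μp univ ≠ ⊤ := by rw [← hsuniv]; exact hstop
      obtain ⟨s', hs', hstop'⟩ := hlfn.2 a (hAΩ ha)
      have hs'univ : s' = univ := eq_univ_of_forall fun z => (hsub z a) ▸ mem_of_mem_nhds hs'
      have hntop : μn univ ≠ ⊤ := by rw [← hs'univ]; exact hstop'
      have heq : (μp univ).toReal = (μn univ).toReal := by
        have h1 : measVal μp μn univ = 0 := abs_eq_zero.1 hmv
        have h2 : measVal μp μn univ = (μp univ).toReal - (μn univ).toReal := rfl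
        rw [h2] at h1
        linarith
      rw [hAuniv]
      exact (ENNReal.toReal_eq_toReal_iff' hptop hntop).1 heq
  obtain ⟨m, rfl⟩ : ∃ m, n = m + 1 := ⟨n - 1, (Nat.succ_pred_eq_of_pos hnpos).symm⟩
  have hexp : ((m + 1 : ℕ) : ℝ) - 1 = (m : ℝ) := by push_cast; ring
  rw [hexp] at hsm hH
  obtain ⟨K, hKcomp, hAK, hKΩ⟩ := exists_compact_between hA hΩ hAΩ
  set V := interior K with hVdef
  have hVopen : IsOpen V := isOpen_interior
  have hAV : A ⊆ V := hAK
  have hVK : V ⊆ K := interior_subset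
  have hVΩ : V ⊆ Ω := hVK.trans hKΩ
  have hpK : μp K ≠ ⊤ := measure_compact_ne_top μp hlfp.2 hKcomp hKΩ
  have hnK : μn K ≠ ⊤ := measure_compact_ne_top μn hlfn.2 hKcomp hKΩ
  set P := μp.restrict V with hPdef
  set N := μn.restrict V with hNdef
  haveI hPfin : IsFiniteMeasure P := ⟨by
    rw [hPdef, Measure.restrict_apply_univ]
    exact lt_of_le_of_lt (measure_mono hVK) hpK.lt_top⟩
  haveI hNfin : IsFiniteMeasure N := ⟨by
    rw [hNdef, Measure.restrict_apply_univ]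
    exact lt_of_le_of_lt (measure_mono hVK) hnK.lt_top⟩
  set σ := P + N with hσdef
  haveI hσfin : IsFiniteMeasure σ := by rw [hσdef]; infer_instance
  have hPapp : ∀ B : Set (Eucl (m+1)), MeasurableSet B → B ⊆ V → P B = μp B := by
    intro B hB hBV
    rw [hPdef, Measure.restrict_apply hB, inter_eq_self_of_subset_left hBV]
  have hNapp : ∀ B : Set (Eucl (m+1)), MeasurableSet B → B ⊆ V → N B = μn B := by
    intro B hB hBV
    rw [hNdef, Measure.restrict_apply hB, inter_eq_self_of_subset_left hBV]
  obtain ⟨S, hSm, hpS, hnS⟩ := hsing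
  have hPS : P S = 0 := by
    rw [hPdef, Measure.restrict_apply hSm]
    exact le_antisymm ((measure_mono inter_subset_left).trans hpS.le) zero_le
  have hNSc : N Sᶜ = 0 := by
    rw [hNdef, Measure.restrict_apply hSm.compl]
    exact le_antisymm ((measure_mono inter_subset_left).trans hnS.le) zero_le
  have hB1 := Besicovitch.ae_tendsto_rnDeriv P σ
  have hB2 := Besicovitch.ae_tendsto_rnDeriv N σ
  have hrn1 : ∀ᵐ x ∂σ, x ∈ S → P.rnDeriv σ x = 0 := by
    rw [← ae_restrict_iff' hSm]
    have h0 : ∫⁻ x in S, P.rnDeriv σ x ∂σ = 0 :=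
      le_antisymm ((Measure.setLIntegral_rnDeriv_le S).trans hPS.le) zero_le
    exact (lintegral_eq_zero_iff (Measure.measurable_rnDeriv P σ)).1 h0
  have hrn2 : ∀ᵐ x ∂σ, x ∈ Sᶜ → N.rnDeriv σ x = 0 := by
    rw [← ae_restrict_iff' hSm.compl]
    have h0 : ∫⁻ x in Sᶜ, N.rnDeriv σ x ∂σ = 0 :=
      le_antisymm ((Measure.setLIntegral_rnDeriv_le Sᶜ).trans hNSc.le) zero_le
    exact (lintegral_eq_zero_iff (Measure.measurable_rnDeriv N σ)).1 h0
  have hVae : ∀ᵐ x ∂σ, x ∈ V := by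
    have hPVc : P Vᶜ = 0 := by
      rw [hPdef, Measure.restrict_apply hVopen.measurableSet.compl]
      simp
    have hNVc : N Vᶜ = 0 := by
      rw [hNdef, Measure.restrict_apply hVopen.measurableSet.compl]
      simp
    have hσVc : σ Vᶜ = 0 := by
      rw [hσdef, Measure.add_apply, hPVc, hNVc, add_zero]
    rw [ae_iff]
    exact hσVc
  set csph := μH[(m:ℝ)] (Metric.sphere (0 : Eucl (m+1)) 1) with hcsphdef
  have hcsph : csph ≠ ⊤ := (sphere_meas m).ne
  set Cb : ℝ≥0∞ := ENNReal.ofReal C * csph with hCbdef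
  have hCbne : Cb ≠ ⊤ := ENNReal.mul_ne_top ENNReal.ofReal_ne_top hcsph
  set Cb' : ℝ≥0∞ := (2:ℝ≥0∞) ^ (m:ℝ) * (2 * Cb) with hCb'def
  have hCb'ne : Cb' ≠ ⊤ := ENNReal.mul_ne_top
    (ENNReal.rpow_lt_top_of_nonneg (Nat.cast_nonneg m) (by norm_num)).ne
    (ENNReal.mul_ne_top (by norm_num) hCbne)
  have hsmB : ∀ (x : Eucl (m+1)) (ρ : ℝ), 0 < ρ → Metric.closedBall x ρ ⊆ V →
      ENNReal.ofReal |(P (Metric.ball x ρ)).toReal - (N (Metric.ball x ρ)).toReal| ≤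
        Cb * ENNReal.ofReal ρ ^ (m:ℝ) := by
    intro x ρ hρ hsubV
    have hball : Metric.ball x ρ ⊆ V := Metric.ball_subset_closedBall.trans hsubV
    have hPeq : P (Metric.ball x ρ) = μp (Metric.ball x ρ) :=
      hPapp _ measurableSet_ball hball
    have hNeq : N (Metric.ball x ρ) = μn (Metric.ball x ρ) :=
      hNapp _ measurableSet_ball hball
    have hclos : closure (Metric.ball x ρ) ⊆ Ω := by
      rw [closure_ball x hρ.ne']
      exact hsubV.trans hVΩ
    have h1 := hsm (Metric.ball x ρ) (smooth_ball x hρ) hclos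
    rw [frontier_ball x hρ.ne'] at h1
    have h2 : ENNReal.ofReal C * μH[(m:ℝ)] (Metric.sphere x ρ) ≤
        Cb * ENNReal.ofReal ρ ^ (m:ℝ) := by
      calc ENNReal.ofReal C * μH[(m:ℝ)] (Metric.sphere x ρ)
          ≤ ENNReal.ofReal C * (ENNReal.ofReal ρ ^ (m:ℝ) * csph) :=
            mul_le_mul_right (sphere_scaled m x hρ) _
        _ = Cb * ENNReal.ofReal ρ ^ (m:ℝ) := by simp only [hCbdef]; ring
    refine le_trans (le_of_eq ?_) (le_trans h1 h2)
    rw [hPeq, hNeq]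
    rfl
  have hGood : ∀ᵐ x ∂σ, ∃ δ > 0, ∀ ρ : ℝ, 0 < ρ → ρ ≤ δ →
      σ (Metric.closedBall x ρ) ≤ Cb' * ENNReal.ofReal ρ ^ (m:ℝ) := by
    filter_upwards [hB1, hB2, hrn1, hrn2, hVae] with x hx1 hx2 hr1 hr2 hxV
    obtain ⟨δ₂, hδ₂pos, hδ₂⟩ := Metric.isOpen_iff.1 hVopen x hxV
    have hQev : ∃ δ₁ > 0, δ₁ ≤ δ₂ ∧
        ((∀ r, 0 < r → r < δ₁ →
            P (Metric.closedBall x r) ≤ 4⁻¹ * σ (Metric.closedBall x r)) ∨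
         (∀ r, 0 < r → r < δ₁ →
            N (Metric.closedBall x r) ≤ 4⁻¹ * σ (Metric.closedBall x r))) := by
      have hhalf : ∀ (Q : Measure (Eucl (m+1))),
          (∀ s, Q s ≤ σ s) →
          Tendsto (fun r => Q (Metric.closedBall x r) / σ (Metric.closedBall x r))
            (𝓝[>] 0) (𝓝 0) →
          ∃ u > (0:ℝ), ∀ r, 0 < r → r < u →
            Q (Metric.closedBall x r) ≤ 4⁻¹ * σ (Metric.closedBall x r) := by
        intro Q hQle hQt
        have hev : ∀ᶠ r in 𝓝[>] (0:ℝ),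
            Q (Metric.closedBall x r) / σ (Metric.closedBall x r) < 4⁻¹ :=
          hQt.eventually_lt_const (by norm_num)
        obtain ⟨u, hu, husub⟩ :=
          (mem_nhdsGT_iff_exists_Ioo_subset' (by norm_num : (0:ℝ) < 1)).1 hev
        refine ⟨u, hu, ?_⟩
        intro r hr hru
        by_cases h0 : σ (Metric.closedBall x r) = 0
        · have hq0 : Q (Metric.closedBall x r) = 0 :=
            le_antisymm ((hQle _).trans h0.le) zero_le
          simp [hq0]
        · have hfin : σ (Metric.closedBall x r) ≠ ⊤ := measure_ne_top σ _
          have hdiv := husub ⟨hr, hru⟩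
          calc Q (Metric.closedBall x r)
              = Q (Metric.closedBall x r) / σ (Metric.closedBall x r) *
                  σ (Metric.closedBall x r) := (ENNReal.div_mul_cancel h0 hfin).symm
            _ ≤ 4⁻¹ * σ (Metric.closedBall x r) :=
                mul_le_mul_left hdiv.le _
      by_cases hxS : x ∈ S
      · rw [hr1 hxS] at hx1
        obtain ⟨u, hu, hub⟩ := hhalf P (fun s => by
          rw [hσdef, Measure.add_apply]; exact le_self_add) hx1
        exact ⟨min u δ₂, lt_min hu hδ₂pos, min_le_right _ _,
          Or.inl fun r hr hru => hub r hr (lt_of_lt_of_le hru (min_le_left _ _))⟩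
      · rw [hr2 hxS] at hx2
        obtain ⟨u, hu, hub⟩ := hhalf N (fun s => by
          rw [hσdef, Measure.add_apply]; exact le_add_self) hx2
        exact ⟨min u δ₂, lt_min hu hδ₂pos, min_le_right _ _,
          Or.inr fun r hr hru => hub r hr (lt_of_lt_of_le hru (min_le_left _ _))⟩
    obtain ⟨δ₁, hδ₁pos, hδ₁le, hQor⟩ := hQev
    have hcBV : ∀ ρ : ℝ, 0 < ρ → ρ < δ₁ → Metric.closedBall x ρ ⊆ V := by
      intro ρ hρ hρδ
      refine subset_trans ?_ hδ₂
      exact Metric.closedBall_subset_ball (lt_of_lt_of_le hρδ hδ₁le)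
    have hσball : ∀ ρ : ℝ, 0 < ρ → ρ < δ₁ →
        σ (Metric.ball x ρ) ≤ 2 * Cb * ENNReal.ofReal ρ ^ (m:ℝ) := by
      rcases hQor with hQ | hQ
      · intro ρ hρ hρδ
        have h := key_ball m P N Cb
          (fun ρ' hρ' hρδ' => hsmB x ρ' hρ' (hcBV ρ' hρ' hρδ'))
          (fun r hr hrδ => by rw [← hσdef] at *; exact hQ r hr hrδ) ρ hρ hρδ
        rwa [← hσdef] at h
      · intro ρ hρ hρδ
        have hNP : N + P = σ := (add_comm N P).trans hσdef.symm
        have h := key_ball m N P Cb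
          (fun ρ' hρ' hρδ' => by
            have := hsmB x ρ' hρ' (hcBV ρ' hρ' hρδ')
            rwa [abs_sub_comm] at this)
          (fun r hr hrδ => by rw [hNP]; exact hQ r hr hrδ) ρ hρ hρδ
        rwa [hNP] at h
    refine ⟨δ₁/4, by positivity, ?_⟩
    intro ρ hρ hρle
    calc σ (Metric.closedBall x ρ) ≤ σ (Metric.ball x (2*ρ)) :=
          measure_mono (Metric.closedBall_subset_ball (by linarith))
      _ ≤ 2 * Cb * ENNReal.ofReal (2*ρ) ^ (m:ℝ) := hσball _ (by linarith) (by linarith)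
      _ = Cb' * ENNReal.ofReal ρ ^ (m:ℝ) := by
          simp only [hCb'def]
          rw [ENNReal.ofReal_mul (by norm_num : (0:ℝ) ≤ 2),
            ENNReal.mul_rpow_of_nonneg _ _ (Nat.cast_nonneg m),
            show ENNReal.ofReal 2 = 2 by norm_num]
          ring
  set G : Set (Eucl (m+1)) := {x | ∃ δ > 0, ∀ ρ : ℝ, 0 < ρ → ρ ≤ δ →
      σ (Metric.closedBall x ρ) ≤ Cb' * ENNReal.ofReal ρ ^ (m:ℝ)} with hGdef
  have hGc : σ Gᶜ = 0 := by
    have := ae_iff.1 hGood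
    exact this
  set Am : ℕ → Set (Eucl (m+1)) := fun k => {x | x ∈ A ∧ ∀ ρ : ℝ, 0 < ρ → ρ ≤ 1/(k+1) →
      σ (Metric.closedBall x ρ) ≤ Cb' * ENNReal.ofReal ρ ^ (m:ℝ)} with hAmdef
  have hsubAm : A ∩ G ⊆ ⋃ k, Am k := by
    rintro x ⟨hxA, δ, hδpos, hδ⟩
    obtain ⟨k, hk⟩ := exists_nat_one_div_lt hδpos
    exact mem_iUnion.2 ⟨k, hxA, fun ρ hρ hρle => hδ ρ hρ (hρle.trans hk.le)⟩
  have hAm0 : ∀ k, σ (Am k) = 0 := by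
    intro k
    apply null_of_small hCb'ne one_pos
    intro ε hε _
    have hAmH : μH[(m:ℝ)] (Am k) = 0 :=
      le_antisymm (le_trans (measure_mono fun x hx => hx.1) hH.le) zero_le
    have happ := Measure.hausdorffMeasure_apply (m:ℝ) (Am k)
    rw [hAmH] at happ
    have hk1 : (0:ℝ≥0∞) < ENNReal.ofReal (1/(k+1)) := ENNReal.ofReal_pos.2 (by positivity)
    have hiInf : (⨅ (t : ℕ → Set (Eucl (m+1))) (_ : Am k ⊆ ⋃ j, t j)
        (_ : ∀ j, EMetric.diam (t j) ≤ ENNReal.ofReal (1/(k+1))),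
        ∑' j, ⨆ _ : (t j).Nonempty, EMetric.diam (t j) ^ (m:ℝ)) ≤ 0 := by
      rw [happ]
      exact le_iSup₂_of_le (ENNReal.ofReal (1/(k+1))) hk1 le_rfl
    have hlt : (⨅ (t : ℕ → Set (Eucl (m+1))) (_ : Am k ⊆ ⋃ j, t j)
        (_ : ∀ j, EMetric.diam (t j) ≤ ENNReal.ofReal (1/(k+1))),
        ∑' j, ⨆ _ : (t j).Nonempty, EMetric.diam (t j) ^ (m:ℝ)) < ENNReal.ofReal ε :=
      lt_of_le_of_lt hiInf (ENNReal.ofReal_pos.2 hε)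
    obtain ⟨t, ht⟩ := iInf_lt_iff.1 hlt
    obtain ⟨hcov, ht2⟩ := iInf_lt_iff.1 ht
    obtain ⟨hdiam, htsum⟩ := iInf_lt_iff.1 ht2
    have hAmsub : Am k ⊆ ⋃ j, (Am k ∩ t j) := by
      intro x hx
      obtain ⟨j, hj⟩ := mem_iUnion.1 (hcov hx)
      exact mem_iUnion.2 ⟨j, hx, hj⟩
    calc σ (Am k) ≤ ∑' j, σ (Am k ∩ t j) :=
          (measure_mono hAmsub).trans (measure_iUnion_le _)
      _ ≤ ∑' j, Cb' * ⨆ _ : (t j).Nonempty, EMetric.diam (t j) ^ (m:ℝ) :=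
          ENNReal.tsum_le_tsum fun j =>
            cover_term m k σ Cb' hCb'ne (Am k) (fun x hx => hx.2) (t j) (hdiam j)
      _ = Cb' * ∑' j, ⨆ _ : (t j).Nonempty, EMetric.diam (t j) ^ (m:ℝ) :=
          ENNReal.tsum_mul_left
      _ ≤ Cb' * ENNReal.ofReal ε := mul_le_mul_right htsum.le _
  have hσA : σ A = 0 := by
    have h1 : σ A ≤ σ (A ∩ G) + σ (A \ G) := measure_le_inter_add_diff σ A G
    have h2 : σ (A ∩ G) = 0 := by
      refine le_antisymm (le_trans (measure_mono hsubAm) ?_) zero_le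
      refine le_trans (measure_iUnion_le _) ?_
      simp [hAm0]
    have h3 : σ (A \ G) = 0 :=
      le_antisymm (le_trans (measure_mono fun x hx => hx.2) hGc.le) zero_le
    rw [h2, h3, add_zero] at h1
    exact le_antisymm h1 zero_le
  have hAmeas : MeasurableSet A := hA.isClosed.measurableSet
  have hPA : P A = μp A := hPapp A hAmeas hAV
  have hNA : N A = μn A := hNapp A hAmeas hAV
  have hsplit : P A + N A = 0 := by
    rw [← Measure.add_apply, ← hσdef]
    exact hσA
  have hp0 : P A = 0 := by
    have := add_eq_zero.1 hsplit
    exact this.1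
  have hn0 : N A = 0 := (add_eq_zero.1 hsplit).2
  rw [← hPA, ← hNA, hp0, hn0]
end
end
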